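/- arXiv:2408.03743 — 6 statements merged into one kernel-verified Lean document; each statement's English description precedes it below -/
import Mathlib

section
/- Two Steiner triple systems of order 7 (Fano planes) on the same point set are orthogonal if and only if they are disjoint (have no blocks in common). -/
/-- A Steiner triple system: every block has 3 points and every pair of
distinct points lies in exactly one block. -/
def IsSteiner {V : Type*} [DecidableEq V] (B : Finset (Finset V)) : Prop :=
  (∀ b ∈ B, b.card = 3) ∧
  ∀ x y : V, x ≠ y → ∃! b : Finset V, b ∈ B ∧ x ∈ b ∧ y ∈ b

/-- A Fano plane: a Steiner triple system on a 7-point set. -/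
def IsFano {V : Type*} [DecidableEq V] [Fintype V] (B : Finset (Finset V)) : Prop :=
  Fintype.card V = 7 ∧ IsSteiner B

/-- Two systems on the same point set are disjoint if they share no block. -/
def DisjointSTS {V : Type*} [DecidableEq V] (B1 B2 : Finset (Finset V)) : Prop :=
  ∀ b : Finset V, ¬ (b ∈ B1 ∧ b ∈ B2)

/-- Orthogonality of two Steiner triple systems: disjoint, and two distinct
pairs lying in blocks of the first system with a common third point never have
the same third point in the second system. -/
def OrthogonalSTS {V : Type*} [DecidableEq V] (B1 B2 : Finset (Finset V)) : Prop :=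
  DisjointSTS B1 B2 ∧
  ∀ x y z u v a b : V, ({x, y} : Finset V) ≠ ({u, v} : Finset V) →
    ({x, y, z} : Finset V) ∈ B1 → ({u, v, z} : Finset V) ∈ B1 →
    ({x, y, a} : Finset V) ∈ B2 → ({u, v, b} : Finset V) ∈ B2 → a ≠ b

theorem tcd {V : Type*} [DecidableEq V] {x y z : V}
    (h : ({x, y, z} : Finset V).card = 3) : x ≠ y ∧ x ≠ z ∧ y ≠ z := by
  refine ⟨?_, ?_, ?_⟩ <;> intro e <;> subst e <;> simp at h <;>
    · have h2 := Finset.card_insert_le (α := V)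
      first
      | (have := h2 x {z}; simp at this; omega)
      | (have := h2 y {x}; simp at this; omega)
      | (have := h2 x {y}; simp at this; omega)

theorem pair_of_triple {V : Type*} [DecidableEq V] {x y z u v : V}
    (hxz : x ≠ z) (hyz : y ≠ z) (huz : u ≠ z) (hvz : v ≠ z)
    (h : ({x, y, z} : Finset V) = {u, v, z}) : ({x, y} : Finset V) = {u, v} := by
  ext w
  have := Finset.ext_iff.mp h w
  simp only [Finset.mem_insert, Finset.mem_singleton] at this ⊢
  constructor
  · rintro (rfl | rfl)
    · rcases this.mp (Or.inl rfl) with h' | h' | h' <;> tauto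
    · rcases this.mp (Or.inr (Or.inl rfl)) with h' | h' | h' <;> tauto
  · rintro (rfl | rfl)
    · rcases this.mpr (Or.inl rfl) with h' | h' | h' <;> tauto
    · rcases this.mpr (Or.inr (Or.inl rfl)) with h' | h' | h' <;> tauto

/-- Two Fano planes on the same point set are orthogonal iff they are disjoint. -/
theorem orthogonal_iff_disjoint_of_fano {V : Type*} [DecidableEq V] [Fintype V]
    (B1 B2 : Finset (Finset V)) (h1 : IsFano B1) (h2 : IsFano B2) :
    OrthogonalSTS B1 B2 ↔ DisjointSTS B1 B2 := by
  constructor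
  · exact fun h => h.1
  · intro hd
    refine ⟨hd, ?_⟩
    intro x y z u v a b hpair hxyz huvz hxya huvb
    rintro rfl
    obtain ⟨hxy, hxz, hyz⟩ := tcd (h1.2.1 _ hxyz)
    obtain ⟨huv, huz, hvz⟩ := tcd (h1.2.1 _ huvz)
    obtain ⟨-, hxa, hya⟩ := tcd (h2.2.1 _ hxya)
    obtain ⟨-, hua, hva⟩ := tcd (h2.2.1 _ huvb)
    have haz : a ≠ z := by rintro rfl; exact hd _ ⟨hxyz, hxya⟩
    have uniq1 : ∀ (p q : V) (c c' : Finset V), p ≠ q → c ∈ B1 → c' ∈ B1 →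
        p ∈ c → q ∈ c → p ∈ c' → q ∈ c' → c = c' := by
      intro p q c c' hpq hc hc' hp hq hp' hq'
      obtain ⟨d, -, hu⟩ := h1.2.2 p q hpq
      rw [hu c ⟨hc, hp, hq⟩, hu c' ⟨hc', hp', hq'⟩]
    have uniq2 : ∀ (p q : V) (c c' : Finset V), p ≠ q → c ∈ B2 → c' ∈ B2 →
        p ∈ c → q ∈ c → p ∈ c' → q ∈ c' → c = c' := by
      intro p q c c' hpq hc hc' hp hq hp' hq'
      obtain ⟨d, -, hu⟩ := h2.2.2 p q hpq
      rw [hu c ⟨hc, hp, hq⟩, hu c' ⟨hc', hp', hq'⟩]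
    have key : ({x, y, z} : Finset V) ≠ {u, v, z} :=
      fun he => hpair (pair_of_triple hxz hyz huz hvz he)
    have hxu : x ≠ u := fun e =>
      key (uniq1 x z _ _ hxz hxyz huvz (by simp) (by simp) (by simp [e]) (by simp))
    have hxv : x ≠ v := fun e =>
      key (uniq1 x z _ _ hxz hxyz huvz (by simp) (by simp) (by simp [e]) (by simp))
    have hyu : y ≠ u := fun e =>
      key (uniq1 y z _ _ hyz hxyz huvz (by simp) (by simp) (by simp [e]) (by simp))
    have hyv : y ≠ v := fun e =>
      key (uniq1 y z _ _ hyz hxyz huvz (by simp) (by simp) (by simp [e]) (by simp))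
    obtain ⟨c1, ⟨hc1B, hzc1, hac1⟩, -⟩ := h1.2.2 z a haz.symm
    obtain ⟨c2, ⟨hc2B, hzc2, hac2⟩, -⟩ := h2.2.2 z a haz.symm
    -- third point of c1
    have hsub1 : ({z, a} : Finset V) ⊆ c1 := by
      intro w hw; simp at hw; rcases hw with rfl | rfl <;> assumption
    have hsub2 : ({z, a} : Finset V) ⊆ c2 := by
      intro w hw; simp at hw; rcases hw with rfl | rfl <;> assumption
    have hne1 : (c1 \ ({z, a} : Finset V)).Nonempty := by
      rw [← Finset.card_pos, Finset.card_sdiff_of_subset hsub1, h1.2.1 _ hc1B,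
        Finset.card_pair haz.symm]
      norm_num
    have hne2 : (c2 \ ({z, a} : Finset V)).Nonempty := by
      rw [← Finset.card_pos, Finset.card_sdiff_of_subset hsub2, h2.2.1 _ hc2B,
        Finset.card_pair haz.symm]
      norm_num
    obtain ⟨t1, ht1⟩ := hne1
    obtain ⟨t2, ht2⟩ := hne2
    simp only [Finset.mem_sdiff, Finset.mem_insert, Finset.mem_singleton, not_or] at ht1 ht2
    obtain ⟨ht1c, ht1z, ht1a⟩ := ht1
    obtain ⟨ht2c, ht2z, ht2a⟩ := ht2
    -- t1 avoids x, y, u, v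
    have ht1x : t1 ≠ x := by
      rintro rfl
      have : c1 = {t1, y, z} :=
        uniq1 t1 z c1 _ (by simpa using hxz) hc1B hxyz ht1c hzc1 (by simp) (by simp)
      rw [this] at hac1; simp at hac1
      rcases hac1 with h' | h' | h' <;> [exact hxa h'.symm; exact hya h'.symm; exact haz h']
    have ht1y : t1 ≠ y := by
      rintro rfl
      have : c1 = {x, t1, z} :=
        uniq1 t1 z c1 _ (by simpa using hyz) hc1B hxyz ht1c hzc1 (by simp) (by simp)
      rw [this] at hac1; simp at hac1
      rcases hac1 with h' | h' | h' <;> [exact hxa h'.symm; exact hya h'.symm; exact haz h']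
    have ht1u : t1 ≠ u := by
      rintro rfl
      have : c1 = {t1, v, z} :=
        uniq1 t1 z c1 _ (by simpa using huz) hc1B huvz ht1c hzc1 (by simp) (by simp)
      rw [this] at hac1; simp at hac1
      rcases hac1 with h' | h' | h' <;> [exact hua h'.symm; exact hva h'.symm; exact haz h']
    have ht1v : t1 ≠ v := by
      rintro rfl
      have : c1 = {u, t1, z} :=
        uniq1 t1 z c1 _ (by simpa using hvz) hc1B huvz ht1c hzc1 (by simp) (by simp)
      rw [this] at hac1; simp at hac1
      rcases hac1 with h' | h' | h' <;> [exact hua h'.symm; exact hva h'.symm; exact haz h']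
    -- t2 avoids x, y, u, v
    have ht2x : t2 ≠ x := by
      rintro rfl
      have : c2 = {t2, y, a} :=
        uniq2 t2 a c2 _ (by simpa using hxa.symm ∘ Eq.symm) hc2B hxya ht2c hac2 (by simp) (by simp)
      rw [this] at hzc2; simp at hzc2
      rcases hzc2 with h' | h' | h' <;> [exact hxz h'.symm; exact hyz h'.symm; exact haz h'.symm]
    have ht2y : t2 ≠ y := by
      rintro rfl
      have : c2 = {x, t2, a} :=
        uniq2 t2 a c2 _ (by simpa using hya.symm ∘ Eq.symm) hc2B hxya ht2c hac2 (by simp) (by simp)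
      rw [this] at hzc2; simp at hzc2
      rcases hzc2 with h' | h' | h' <;> [exact hxz h'.symm; exact hyz h'.symm; exact haz h'.symm]
    have ht2u : t2 ≠ u := by
      rintro rfl
      have : c2 = {t2, v, a} :=
        uniq2 t2 a c2 _ (by simpa using hua.symm ∘ Eq.symm) hc2B huvb ht2c hac2 (by simp) (by simp)
      rw [this] at hzc2; simp at hzc2
      rcases hzc2 with h' | h' | h' <;> [exact huz h'.symm; exact hvz h'.symm; exact haz h'.symm]
    have ht2v : t2 ≠ v := by
      rintro rfl
      have : c2 = {u, t2, a} :=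
        uniq2 t2 a c2 _ (by simpa using hva.symm ∘ Eq.symm) hc2B huvb ht2c hac2 (by simp) (by simp)
      rw [this] at hzc2; simp at hzc2
      rcases hzc2 with h' | h' | h' <;> [exact huz h'.symm; exact hvz h'.symm; exact haz h'.symm]
    -- the six points x,y,z,u,v,a are distinct, so t1 = t2 = the seventh point
    have hS : ({x, y, z, u, v, a} : Finset V).card = 6 := by
      simp [Finset.card_insert_of_notMem, hxy, hxz, hxu, hxv, fun e => hxa e, hyz, hyu, hyv,
        fun e => hya e, Ne.symm huz, Ne.symm hvz, Ne.symm haz, huv, fun e => hua e,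
        fun e => hva e]
    have hcompl : (({x, y, z, u, v, a} : Finset V)ᶜ).card = 1 := by
      rw [Finset.card_compl, hS, h1.1]
    obtain ⟨w, hw⟩ := Finset.card_eq_one.mp hcompl
    have hm1 : t1 ∈ ({x, y, z, u, v, a} : Finset V)ᶜ := by
      simp [ht1x, ht1y, ht1z, ht1u, ht1v, ht1a]
    have hm2 : t2 ∈ ({x, y, z, u, v, a} : Finset V)ᶜ := by
      simp [ht2x, ht2y, ht2z, ht2u, ht2v, ht2a]
    rw [hw, Finset.mem_singleton] at hm1 hm2
    have ht12 : t1 = t2 := hm1.trans hm2.symm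
    -- c1 = {z,a,t1} = {z,a,t2} = c2
    have hc1 : c1 = {z, a, t1} := by
      refine (Finset.eq_of_subset_of_card_le ?_ ?_).symm
      · intro w hw; simp at hw; rcases hw with rfl | rfl | rfl <;> assumption
      · rw [h1.2.1 _ hc1B]
        exact le_of_eq (Finset.card_eq_three.mpr
          ⟨z, a, t1, haz.symm, Ne.symm ht1z, Ne.symm ht1a, rfl⟩).symm
    have hc2' : c2 = {z, a, t2} := by
      refine (Finset.eq_of_subset_of_card_le ?_ ?_).symm
      · intro w hw; simp at hw; rcases hw with rfl | rfl | rfl <;> assumption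
      · rw [h2.2.1 _ hc2B]
        exact le_of_eq (Finset.card_eq_three.mpr
          ⟨z, a, t2, haz.symm, Ne.symm ht2z, Ne.symm ht2a, rfl⟩).symm
    exact hd c1 ⟨hc1B, by rw [hc1, ht12, ← hc2']; exact hc2B⟩
end

section
/- The group of permutations of Z/7 that are simultaneously automorphisms of the Fano plane with blocks { {i,i+1,i+3} : i ∈ Z/7 } and of the orthogonal Fano plane with blocks { {i,i+1,i+5} : i ∈ Z/7 } has order 21 and is non-abelian; hence it is isomorphic to the Frobenius group F21 of order 21. -/
/-- A permutation is an automorphism of a block set if it maps blocks to blocks. -/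
def IsAutomorphism {V : Type*} [DecidableEq V] (B : Finset (Finset V)) (σ : Equiv.Perm V) : Prop :=
  ∀ b : Finset V, b.image σ ∈ B ↔ b ∈ B

/-- The group of all automorphisms of a block set, as a subgroup of the
permutation group of the points. -/
def autGroup {V : Type*} [DecidableEq V] (B : Finset (Finset V)) : Subgroup (Equiv.Perm V) where
  carrier := {σ | IsAutomorphism B σ}
  one_mem' := by intro b; simp [Finset.image_id]
  mul_mem' := by
    intro σ τ hσ hτ
    intro b
    have h : Finset.image (⇑(σ * τ)) b = Finset.image ⇑σ (Finset.image ⇑τ b) := by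
      rw [Finset.image_image]; rfl
    rw [h, hσ (Finset.image ⇑τ b), hτ b]
  inv_mem' := by
    intro σ hσ
    intro b
    have h : Finset.image ⇑σ (Finset.image ⇑σ⁻¹ b) = b := by
      ext z
      simp
    have h2 := hσ (Finset.image ⇑σ⁻¹ b)
    rw [h] at h2
    exact h2.symm

/-- The Fano plane on `ZMod 7` with blocks `{i, i+1, i+3}`. -/
def fanoB1 : Finset (Finset (ZMod 7)) :=
  Finset.univ.image (fun i : ZMod 7 => ({i, i + 1, i + 3} : Finset (ZMod 7)))

/-- The Fano plane on `ZMod 7` with blocks `{i, i+1, i+5}`. -/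
def fanoB2 : Finset (Finset (ZMod 7)) :=
  Finset.univ.image (fun i : ZMod 7 => ({i, i + 1, i + 5} : Finset (ZMod 7)))

/-- The permutation `x ↦ 2x` of `ZMod 7`. -/
def lam2 : Equiv.Perm (ZMod 7) :=
  ⟨fun x => 2 * x, fun x => 4 * x, by decide, by decide⟩

/-- The permutation `x ↦ x + 1` of `ZMod 7`. -/
def tau1 : Equiv.Perm (ZMod 7) :=
  ⟨fun x => x + 1, fun x => x - 1, by decide, by decide⟩

/-- The Frobenius group of order 21, realized as the subgroup of `Perm (ZMod 7)`
generated by `x ↦ 2x` and `x ↦ x + 1`. -/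
def F21 : Subgroup (Equiv.Perm (ZMod 7)) := Subgroup.closure {lam2, tau1}

section Aux

private def c1fn : ZMod 7 → ZMod 7 := fun d =>
  if d = 1 then 3 else if d = 2 then 6 else if d = 3 then 1 else
  if d = 4 then 5 else if d = 5 then 4 else if d = 6 then 2 else 0

private def c2fn : ZMod 7 → ZMod 7 := fun d =>
  if d = 1 then 5 else if d = 2 then 3 else if d = 3 then 2 else
  if d = 4 then 6 else if d = 5 then 1 else if d = 6 then 4 else 0

set_option maxRecDepth 8000

private theorem uniq1 : ∀ x y z : ZMod 7, x ≠ y →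
    ({x, y, z} : Finset (ZMod 7)) ∈ fanoB1 → z = x + c1fn (y - x) := by decide

private theorem uniq2 : ∀ x y z : ZMod 7, x ≠ y →
    ({x, y, z} : Finset (ZMod 7)) ∈ fanoB2 → z = x + c2fn (y - x) := by decide

private theorem aconstraint : ∀ a : ZMod 7, a ≠ 0 →
    c1fn (c2fn a) = a + c2fn (c1fn a - a) → a = 1 ∨ a = 2 ∨ a = 4 := by decide

private theorem seven : ∀ x : ZMod 7,
    x = 0 ∨ x = 1 ∨ x = 2 ∨ x = 3 ∨ x = 4 ∨ x = 5 ∨ x = 6 := by decide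

private theorem tau1_aut1 : tau1 ∈ autGroup fanoB1 := by
  show IsAutomorphism fanoB1 tau1; unfold IsAutomorphism; decide

private theorem tau1_aut2 : tau1 ∈ autGroup fanoB2 := by
  show IsAutomorphism fanoB2 tau1; unfold IsAutomorphism; decide

private theorem lam2_aut1 : lam2 ∈ autGroup fanoB1 := by
  show IsAutomorphism fanoB1 lam2; unfold IsAutomorphism; decide

private theorem lam2_aut2 : lam2 ∈ autGroup fanoB2 := by
  show IsAutomorphism fanoB2 lam2; unfold IsAutomorphism; decide

private theorem tau1_pow : ∀ (i : ℕ) (x : ZMod 7), (tau1 ^ i) x = x + (i : ZMod 7)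
  | 0, x => by simp
  | (n+1), x => by
      rw [pow_succ, Equiv.Perm.mul_apply, tau1_pow n]
      show (x + 1) + (n : ZMod 7) = x + ((n : ℕ) + 1 : ℕ)
      push_cast; ring

private theorem lam2_pow : ∀ (j : ℕ) (x : ZMod 7), (lam2 ^ j) x = 2 ^ j * x
  | 0, x => by simp
  | (n+1), x => by
      rw [pow_succ, Equiv.Perm.mul_apply, lam2_pow n]
      show (2 : ZMod 7) ^ n * (2 * x) = 2 ^ (n + 1) * x
      rw [pow_succ]; ring

private theorem affine_apply (i j : ℕ) (x : ZMod 7) :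
    (tau1 ^ i * lam2 ^ j) x = 2 ^ j * x + (i : ZMod 7) := by
  rw [Equiv.Perm.mul_apply, lam2_pow, tau1_pow]

/-- The 21 affine permutations. -/
private def T : Finset (Equiv.Perm (ZMod 7)) :=
  (Finset.range 7 ×ˢ Finset.range 3).image (fun p => tau1 ^ p.1 * lam2 ^ p.2)

private theorem main_struct : ∀ σ : Equiv.Perm (ZMod 7),
    σ ∈ autGroup fanoB1 ⊓ autGroup fanoB2 →
    ∃ i < 7, ∃ j < 3, σ = tau1 ^ i * lam2 ^ j := by
  intro σ hσ
  rw [Subgroup.mem_inf] at hσ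
  have h1 : IsAutomorphism fanoB1 σ := hσ.1
  have h2 : IsAutomorphism fanoB2 σ := hσ.2
  have img : ∀ u v w : ZMod 7,
      Finset.image σ {u, v, w} = {σ u, σ v, σ w} := by
    intro u v w
    simp only [Finset.image_insert, Finset.image_singleton]
  have B013 : ({σ 0, σ 1, σ 3} : Finset (ZMod 7)) ∈ fanoB1 := by
    rw [← img]; exact (h1 _).mpr (by decide)
  have B015 : ({σ 0, σ 1, σ 5} : Finset (ZMod 7)) ∈ fanoB2 := by
    rw [← img]; exact (h2 _).mpr (by decide)
  have B032 : ({σ 0, σ 3, σ 2} : Finset (ZMod 7)) ∈ fanoB2 := by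
    rw [← img]; exact (h2 _).mpr (by decide)
  have B054 : ({σ 0, σ 5, σ 4} : Finset (ZMod 7)) ∈ fanoB1 := by
    rw [← img]; exact (h1 _).mpr (by decide)
  have B156 : ({σ 1, σ 5, σ 6} : Finset (ZMod 7)) ∈ fanoB1 := by
    rw [← img]; exact (h1 _).mpr (by decide)
  have B134 : ({σ 1, σ 3, σ 4} : Finset (ZMod 7)) ∈ fanoB2 := by
    rw [← img]; exact (h2 _).mpr (by decide)
  have n01 : σ 0 ≠ σ 1 := σ.injective.ne (by decide)
  have n03 : σ 0 ≠ σ 3 := σ.injective.ne (by decide)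
  have n05 : σ 0 ≠ σ 5 := σ.injective.ne (by decide)
  have n15 : σ 1 ≠ σ 5 := σ.injective.ne (by decide)
  have e3 : σ 3 = σ 0 + c1fn (σ 1 - σ 0) := uniq1 _ _ _ n01 B013
  have e5 : σ 5 = σ 0 + c2fn (σ 1 - σ 0) := uniq2 _ _ _ n01 B015
  have e2 : σ 2 = σ 0 + c2fn (c1fn (σ 1 - σ 0)) := by
    have h := uniq2 _ _ _ n03 B032
    rwa [e3, add_sub_cancel_left] at h
  have e4 : σ 4 = σ 0 + c1fn (c2fn (σ 1 - σ 0)) := by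
    have h := uniq1 _ _ _ n05 B054
    rwa [e5, add_sub_cancel_left] at h
  have e6 : σ 6 = σ 1 + c1fn (c2fn (σ 1 - σ 0) - (σ 1 - σ 0)) := by
    have h := uniq1 _ _ _ n15 B156
    have hd : σ 5 - σ 1 = c2fn (σ 1 - σ 0) - (σ 1 - σ 0) := by
      rw [e5]; ring
    rwa [hd] at h
  have econ : σ 4 = σ 1 + c2fn (c1fn (σ 1 - σ 0) - (σ 1 - σ 0)) := by
    have n13 : σ 1 ≠ σ 3 := σ.injective.ne (by decide)
    have h := uniq2 _ _ _ n13 B134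
    have hd : σ 3 - σ 1 = c1fn (σ 1 - σ 0) - (σ 1 - σ 0) := by
      rw [e3]; ring
    rwa [hd] at h
  have ha0 : σ 1 - σ 0 ≠ 0 := sub_ne_zero_of_ne n01.symm
  have hC : c1fn (c2fn (σ 1 - σ 0)) = (σ 1 - σ 0) +
      c2fn (c1fn (σ 1 - σ 0) - (σ 1 - σ 0)) := by
    have h := e4.symm.trans econ
    linear_combination h
  have hv : ((σ 0).val : ZMod 7) = σ 0 := by
    simp [ZMod.natCast_val, ZMod.cast_id]
  rcases aconstraint _ ha0 hC with ha | ha | ha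
  · have hs1 : σ 1 = σ 0 + 1 := by linear_combination ha
    refine ⟨(σ 0).val, ZMod.val_lt _, 0, by norm_num, Equiv.ext fun x => ?_⟩
    rw [affine_apply, hv]
    rcases seven x with rfl | rfl | rfl | rfl | rfl | rfl | rfl <;>
      (try simp only [e2, e3, e4, e5, e6, hs1]) <;>
      rcases seven (σ 0) with h0 | h0 | h0 | h0 | h0 | h0 | h0 <;>
      rw [h0] <;> decide
  · have hs1 : σ 1 = σ 0 + 2 := by linear_combination ha
    refine ⟨(σ 0).val, ZMod.val_lt _, 1, by norm_num, Equiv.ext fun x => ?_⟩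
    rw [affine_apply, hv]
    rcases seven x with rfl | rfl | rfl | rfl | rfl | rfl | rfl <;>
      (try simp only [e2, e3, e4, e5, e6, hs1]) <;>
      rcases seven (σ 0) with h0 | h0 | h0 | h0 | h0 | h0 | h0 <;>
      rw [h0] <;> decide
  · have hs1 : σ 1 = σ 0 + 4 := by linear_combination ha
    refine ⟨(σ 0).val, ZMod.val_lt _, 2, by norm_num, Equiv.ext fun x => ?_⟩
    rw [affine_apply, hv]
    rcases seven x with rfl | rfl | rfl | rfl | rfl | rfl | rfl <;>
      (try simp only [e2, e3, e4, e5, e6, hs1]) <;>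
      rcases seven (σ 0) with h0 | h0 | h0 | h0 | h0 | h0 | h0 <;>
      rw [h0] <;> decide

end Aux

/-- The group of common automorphisms of the two orthogonal Fano planes `fanoB1`
and `fanoB2` has order 21 and is non-abelian, hence is isomorphic to the
Frobenius group `F21` of order 21. -/
theorem commonAut_card_21_nonabelian_isoF21 :
    Nat.card (autGroup fanoB1 ⊓ autGroup fanoB2 : Subgroup (Equiv.Perm (ZMod 7))) = 21 ∧
    (∃ σ τ : (autGroup fanoB1 ⊓ autGroup fanoB2 : Subgroup (Equiv.Perm (ZMod 7))),
      σ * τ ≠ τ * σ) ∧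
    Nonempty ((autGroup fanoB1 ⊓ autGroup fanoB2 : Subgroup (Equiv.Perm (ZMod 7))) ≃* F21) := by
  have htauH : tau1 ∈ autGroup fanoB1 ⊓ autGroup fanoB2 :=
    Subgroup.mem_inf.mpr ⟨tau1_aut1, tau1_aut2⟩
  have hlamH : lam2 ∈ autGroup fanoB1 ⊓ autGroup fanoB2 :=
    Subgroup.mem_inf.mpr ⟨lam2_aut1, lam2_aut2⟩
  have hle1 : (autGroup fanoB1 ⊓ autGroup fanoB2) ≤ F21 := by
    intro σ h
    obtain ⟨i, _, j, _, rfl⟩ := main_struct σ h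
    exact mul_mem (pow_mem (Subgroup.subset_closure (by simp)) _)
      (pow_mem (Subgroup.subset_closure (by simp)) _)
  have hle2 : F21 ≤ autGroup fanoB1 ⊓ autGroup fanoB2 := by
    refine (Subgroup.closure_le _).mpr ?_
    rintro x hx
    simp only [Set.mem_insert_iff, Set.mem_singleton_iff] at hx
    rcases hx with rfl | rfl
    · exact hlamH
    · exact htauH
  have hEq : autGroup fanoB1 ⊓ autGroup fanoB2 = F21 := le_antisymm hle1 hle2
  have hset : ((autGroup fanoB1 ⊓ autGroup fanoB2 : Subgroup (Equiv.Perm (ZMod 7))) : Set _)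
      = (T : Set (Equiv.Perm (ZMod 7))) := by
    ext σ
    constructor
    · intro h
      obtain ⟨i, hi, j, hj, rfl⟩ := main_struct σ h
      exact Finset.mem_coe.mpr (Finset.mem_image.mpr ⟨(i, j),
        Finset.mem_product.mpr ⟨Finset.mem_range.mpr hi, Finset.mem_range.mpr hj⟩, rfl⟩)
    · intro h
      obtain ⟨p, hp, rfl⟩ := Finset.mem_image.mp (Finset.mem_coe.mp h)
      exact mul_mem (pow_mem htauH _) (pow_mem hlamH _)
  refine ⟨?_, ⟨⟨lam2, hlamH⟩, ⟨tau1, htauH⟩, fun hcomm => ?_⟩,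
    ⟨MulEquiv.subgroupCongr hEq⟩⟩
  · have h1 : Nat.card (autGroup fanoB1 ⊓ autGroup fanoB2 : Subgroup (Equiv.Perm (ZMod 7)))
        = Nat.card ((↑T : Set (Equiv.Perm (ZMod 7)))) := by
      exact Nat.card_congr (Equiv.setCongr hset)
    rw [h1, Nat.card_coe_set_eq, Set.ncard_coe_finset]
    decide
  · have h2 : lam2 * tau1 = tau1 * lam2 := congrArg Subtype.val hcomm
    exact absurd h2 (by decide)
end

section
/- Let F and S be two orthogonal Fano planes with common point set V. For every block {a,b,c} of F there exists a unique block {x,y,z} of S disjoint from {a,b,c}; moreover, for every point v ∈ V there exist a unique block T1 of F and a unique block T2 of S such that {v}, T1, T2 partition V. -/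
section Aux
set_option linter.unusedSectionVars false

variable {V : Type*} [DecidableEq V] [Fintype V]

lemma steiner_unique {B : Finset (Finset V)} (h : IsSteiner B)
    {x y : V} (hxy : x ≠ y) {b b' : Finset V} (hb : b ∈ B) (hb' : b' ∈ B)
    (hxb : x ∈ b) (hyb : y ∈ b) (hxb' : x ∈ b') (hyb' : y ∈ b') : b = b' := by
  obtain ⟨c, -, hu⟩ := h.2 x y hxy
  rw [hu b ⟨hb, hxb, hyb⟩, hu b' ⟨hb', hxb', hyb'⟩]

lemma replication {B : Finset (Finset V)} (h7 : Fintype.card V = 7)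
    (h : IsSteiner B) (v : V) : (B.filter (fun b => v ∈ b)).card = 3 := by
  have key : (Finset.univ.erase v) = (B.filter (fun b => v ∈ b)).biUnion (fun b => b.erase v) := by
    ext w
    simp only [Finset.mem_erase, Finset.mem_biUnion, Finset.mem_filter, Finset.mem_univ, and_true,
      true_and]
    constructor
    · intro hwv
      obtain ⟨b, ⟨hb, hvb, hwb⟩, -⟩ := h.2 v w (Ne.symm hwv)
      exact ⟨b, ⟨hb, hvb⟩, hwv, hwb⟩
    · rintro ⟨b, -, hwv, -⟩; exact hwv
  have hdisj : ∀ b1 ∈ B.filter (fun b => v ∈ b), ∀ b2 ∈ B.filter (fun b => v ∈ b),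
      b1 ≠ b2 → Disjoint (b1.erase v) (b2.erase v) := by
    intro b1 hb1 b2 hb2 hne
    simp only [Finset.mem_filter] at hb1 hb2
    rw [Finset.disjoint_left]
    intro w hw1 hw2
    simp only [Finset.mem_erase] at hw1 hw2
    exact hne (steiner_unique h (Ne.symm hw1.1) hb1.1 hb2.1 hb1.2 hw1.2 hb2.2 hw2.2)
  have hcard := Finset.card_biUnion hdisj
  rw [← key, Finset.card_erase_of_mem (Finset.mem_univ v), Finset.card_univ, h7] at hcard
  have hsum : ∑ b ∈ B.filter (fun b => v ∈ b), (b.erase v).card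
      = ∑ b ∈ B.filter (fun b => v ∈ b), 2 := by
    apply Finset.sum_congr rfl
    intro b hb
    simp only [Finset.mem_filter] at hb
    rw [Finset.card_erase_of_mem hb.2, h.1 b hb.1]
  rw [hsum, Finset.sum_const, smul_eq_mul] at hcard
  omega

lemma card_blocks {B : Finset (Finset V)} (h7 : Fintype.card V = 7)
    (h : IsSteiner B) : B.card = 7 := by
  have key : ∑ b ∈ B, b.card = ∑ v : V, (B.filter (fun b => v ∈ b)).card := by
    have h1 : ∀ b ∈ B, b.card = ∑ v : V, if v ∈ b then 1 else 0 := by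
      intro b _
      rw [← Finset.card_filter]
      congr 1
      simp
    rw [Finset.sum_congr rfl h1, Finset.sum_comm]
    apply Finset.sum_congr rfl
    intro v _
    rw [Finset.card_filter]
  have h2 : ∑ b ∈ B, b.card = 3 * B.card := by
    rw [Finset.sum_congr rfl h.1, Finset.sum_const, smul_eq_mul]; ring
  have h3 : ∑ v : V, (B.filter (fun b => v ∈ b)).card = 21 := by
    rw [Finset.sum_congr rfl (fun v _ => replication h7 h v), Finset.sum_const, smul_eq_mul,
      Finset.card_univ, h7]
  omega


lemma disjoint_count {F S : Finset (Finset V)} (h7 : Fintype.card V = 7)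
    (hF : IsSteiner F) (hS : IsSteiner S) (hd : DisjointSTS F S)
    {b : Finset V} (hb : b ∈ F) :
    (S.filter (fun t => Disjoint b t)).card = 1 := by
  have hbcard : b.card = 3 := hF.1 b hb
  -- no block of S contains b
  have hnosub : ∀ t ∈ S, ¬ b ⊆ t := by
    intro t ht hsub
    have : b = t := Finset.eq_of_subset_of_card_le hsub (by rw [hS.1 t ht, hbcard])
    exact hd b ⟨hb, this ▸ ht⟩
  -- intersection cards are ≤ 2
  have fle : ∀ t ∈ S, (b ∩ t).card ≤ 2 := by
    intro t ht
    have h3 : (b ∩ t).card ≤ 3 := le_trans (Finset.card_le_card Finset.inter_subset_left) hbcard.le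
    rcases Nat.lt_or_ge (b ∩ t).card 3 with h | h
    · omega
    · exfalso
      have : b ∩ t = b := Finset.eq_of_subset_of_card_le Finset.inter_subset_left (by omega)
      exact hnosub t ht (by rw [← this]; exact Finset.inter_subset_right)
  -- total incidence sum
  have sum9 : ∑ t ∈ S, (b ∩ t).card = 9 := by
    have h1 : ∀ t ∈ S, (b ∩ t).card = ∑ v ∈ b, if v ∈ t then 1 else 0 := by
      intro t _
      rw [← Finset.card_filter, Finset.filter_mem_eq_inter]
    rw [Finset.sum_congr rfl h1, Finset.sum_comm]
    have h2 : ∀ v ∈ b, (∑ t ∈ S, if v ∈ t then 1 else 0) = 3 := by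
      intro v _
      rw [← Finset.card_filter]
      exact replication h7 hS v
    rw [Finset.sum_congr rfl h2, Finset.sum_const, smul_eq_mul, hbcard]
  -- blocks meeting b in exactly 2 points: there are 3 of them
  obtain ⟨x, y, z, hxy, hxz, hyz, hbeq⟩ := Finset.card_eq_three.mp hbcard
  have hxb : x ∈ b := by rw [hbeq]; simp
  have hyb : y ∈ b := by rw [hbeq]; simp
  have hzb : z ∈ b := by rw [hbeq]; simp
  obtain ⟨txy, ⟨htxyS, hx1, hy1⟩, htxyu⟩ := hS.2 x y hxy
  obtain ⟨txz, ⟨htxzS, hx2, hz2⟩, htxzu⟩ := hS.2 x z hxz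
  obtain ⟨tyz, ⟨htyzS, hy3, hz3⟩, htyzu⟩ := hS.2 y z hyz
  have hz1 : z ∉ txy := fun hz1 => hnosub txy htxyS (by rw [hbeq]; intro a ha; simp at ha; rcases ha with rfl|rfl|rfl <;> assumption)
  have hy2 : y ∉ txz := fun hy2 => hnosub txz htxzS (by rw [hbeq]; intro a ha; simp at ha; rcases ha with rfl|rfl|rfl <;> assumption)
  have hx3 : x ∉ tyz := fun hx3 => hnosub tyz htyzS (by rw [hbeq]; intro a ha; simp at ha; rcases ha with rfl|rfl|rfl <;> assumption)
  have hA2 : S.filter (fun t => (b ∩ t).card = 2) = {txy, txz, tyz} := by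
    ext t
    simp only [Finset.mem_filter, Finset.mem_insert, Finset.mem_singleton]
    constructor
    · rintro ⟨htS, hcard2⟩
      obtain ⟨p, q, hpq, hpqeq⟩ := Finset.card_eq_two.mp hcard2
      have hpmem : p ∈ b ∩ t := by rw [hpqeq]; simp
      have hqmem : q ∈ b ∩ t := by rw [hpqeq]; simp
      simp only [Finset.mem_inter] at hpmem hqmem
      have hpb := hpmem.1; have hqb := hqmem.1
      rw [hbeq] at hpb hqb
      simp only [Finset.mem_insert, Finset.mem_singleton] at hpb hqb
      rcases hpb with rfl|rfl|rfl <;> rcases hqb with rfl|rfl|rfl <;>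
        first
        | exact absurd rfl hpq
        | (left; exact htxyu t ⟨htS, hpmem.2, hqmem.2⟩)
        | (left; exact htxyu t ⟨htS, hqmem.2, hpmem.2⟩)
        | (right; left; exact htxzu t ⟨htS, hpmem.2, hqmem.2⟩)
        | (right; left; exact htxzu t ⟨htS, hqmem.2, hpmem.2⟩)
        | (right; right; exact htyzu t ⟨htS, hpmem.2, hqmem.2⟩)
        | (right; right; exact htyzu t ⟨htS, hqmem.2, hpmem.2⟩)
    · rintro (rfl|rfl|rfl)
      · refine ⟨htxyS, ?_⟩
        have : b ∩ t = {x, y} := by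
          ext a
          simp only [Finset.mem_inter, Finset.mem_insert, Finset.mem_singleton, hbeq]
          constructor
          · rintro ⟨(rfl|rfl|rfl), hat⟩ <;> first | (left; rfl) | (right; rfl) | exact absurd hat hz1
          · rintro (rfl|rfl)
            · exact ⟨Or.inl rfl, hx1⟩
            · exact ⟨Or.inr (Or.inl rfl), hy1⟩
        rw [this, Finset.card_insert_of_notMem (by simp [hxy]), Finset.card_singleton]
      · refine ⟨htxzS, ?_⟩
        have : b ∩ t = {x, z} := by
          ext a
          simp only [Finset.mem_inter, Finset.mem_insert, Finset.mem_singleton, hbeq]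
          constructor
          · rintro ⟨(rfl|rfl|rfl), hat⟩ <;> first | (left; rfl) | (right; rfl) | exact absurd hat hy2
          · rintro (rfl|rfl)
            · exact ⟨Or.inl rfl, hx2⟩
            · exact ⟨Or.inr (Or.inr rfl), hz2⟩
        rw [this, Finset.card_insert_of_notMem (by simp [hxz]), Finset.card_singleton]
      · refine ⟨htyzS, ?_⟩
        have : b ∩ t = {y, z} := by
          ext a
          simp only [Finset.mem_inter, Finset.mem_insert, Finset.mem_singleton, hbeq]
          constructor
          · rintro ⟨(rfl|rfl|rfl), hat⟩ <;> first | (left; rfl) | (right; rfl) | exact absurd hat hx3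
          · rintro (rfl|rfl)
            · exact ⟨Or.inr (Or.inl rfl), hy3⟩
            · exact ⟨Or.inr (Or.inr rfl), hz3⟩
        rw [this, Finset.card_insert_of_notMem (by simp [hyz]), Finset.card_singleton]
  have hA2card : (S.filter (fun t => (b ∩ t).card = 2)).card = 3 := by
    rw [hA2]
    have h12 : txy ≠ txz := fun h => hy2 (h ▸ hy1)
    have h13 : txy ≠ tyz := fun h => hx3 (h ▸ hx1)
    have h23 : txz ≠ tyz := fun h => hx3 (h ▸ hx2)
    rw [Finset.card_insert_of_notMem (by simp [h12, h13]),
      Finset.card_insert_of_notMem (by simp [h23]), Finset.card_singleton]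
  -- now arithmetic
  have hScard : S.card = 7 := card_blocks h7 hS
  have hsplit2 := Finset.card_filter_add_card_filter_not (s := S)
    (fun t => (b ∩ t).card = 2)
  have hsumsplit := Finset.sum_filter_add_sum_filter_not S (fun t => (b ∩ t).card = 2)
    (fun t => (b ∩ t).card)
  have hsumA2 : ∑ t ∈ S.filter (fun t => (b ∩ t).card = 2), (b ∩ t).card = 6 := by
    rw [Finset.sum_congr rfl (fun t ht => (Finset.mem_filter.mp ht).2), Finset.sum_const,
      smul_eq_mul, hA2card]
  set R := S.filter (fun t => ¬(b ∩ t).card = 2) with hR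
  have hsumR : ∑ t ∈ R, (b ∩ t).card = 3 := by omega
  have hRle : ∀ t ∈ R, (b ∩ t).card ≤ 1 := by
    intro t ht
    rw [hR, Finset.mem_filter] at ht
    have := fle t ht.1
    omega
  have hsplit1 := Finset.card_filter_add_card_filter_not (s := R)
    (fun t => (b ∩ t).card = 1)
  have hsumsplit1 := Finset.sum_filter_add_sum_filter_not R (fun t => (b ∩ t).card = 1)
    (fun t => (b ∩ t).card)
  have hsumR1 : ∑ t ∈ R.filter (fun t => (b ∩ t).card = 1), (b ∩ t).card
      = (R.filter (fun t => (b ∩ t).card = 1)).card := by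
    rw [Finset.sum_congr rfl (fun t ht => (Finset.mem_filter.mp ht).2), Finset.sum_const,
      smul_eq_mul, mul_one]
  have hsumR0 : ∑ t ∈ R.filter (fun t => ¬(b ∩ t).card = 1), (b ∩ t).card = 0 := by
    apply Finset.sum_eq_zero
    intro t ht
    rw [Finset.mem_filter] at ht
    have := hRle t ht.1
    omega
  have hR0 : S.filter (fun t => Disjoint b t) = R.filter (fun t => ¬(b ∩ t).card = 1) := by
    ext t
    rw [hR, Finset.filter_filter, Finset.mem_filter, Finset.mem_filter]
    constructor
    · rintro ⟨htS, hdisj⟩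
      have h0 : (b ∩ t).card = 0 := by
        rw [Finset.card_eq_zero, ← Finset.disjoint_iff_inter_eq_empty]; exact hdisj
      exact ⟨htS, by omega, by omega⟩
    · rintro ⟨htS, h2, h1⟩
      have := fle t htS
      have h0 : (b ∩ t).card = 0 := by omega
      rw [Finset.card_eq_zero] at h0
      exact ⟨htS, Finset.disjoint_iff_inter_eq_empty.mpr h0⟩
  rw [hR0]
  omega


set_option maxHeartbeats 1000000 in
lemma part2_unique {F S : Finset (Finset V)} (h7 : Fintype.card V = 7)
    (hF : IsSteiner F) (hS : IsSteiner S) (horth : OrthogonalSTS F S)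
    (v : V) (p q : Finset V × Finset V)
    (hp : p.1 ∈ F ∧ p.2 ∈ S ∧ v ∉ p.1 ∧ v ∉ p.2 ∧ Disjoint p.1 p.2 ∧
      insert v (p.1 ∪ p.2) = Finset.univ)
    (hq : q.1 ∈ F ∧ q.2 ∈ S ∧ v ∉ q.1 ∧ v ∉ q.2 ∧ Disjoint q.1 q.2 ∧
      insert v (q.1 ∪ q.2) = Finset.univ) : p = q := by
  obtain ⟨hp1F, hp2S, hvp1, hvp2, hpdisj, hpuniv⟩ := hp
  obtain ⟨hq1F, hq2S, hvq1, hvq2, hqdisj, hquniv⟩ := hq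
  have hcomp : ∀ r : Finset V × Finset V, r.1 ∈ F → r.2 ∈ S → v ∉ r.1 → v ∉ r.2 →
      Disjoint r.1 r.2 → insert v (r.1 ∪ r.2) = Finset.univ →
      r.2 = Finset.univ \ insert v r.1 := by
    rintro ⟨a, c⟩ h1 h2 h3 h4 h5 h6
    ext w
    simp only [Finset.mem_sdiff, Finset.mem_univ, true_and, Finset.mem_insert, not_or]
    constructor
    · intro hw
      exact ⟨fun h => h4 (h ▸ hw), fun h => Finset.disjoint_left.mp h5 h hw⟩
    · rintro ⟨hwv, hwa⟩
      have : w ∈ insert v (a ∪ c) := h6 ▸ Finset.mem_univ w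
      simp only [Finset.mem_insert, Finset.mem_union] at this
      rcases this with rfl | h | h
      · exact absurd rfl hwv
      · exact absurd h hwa
      · exact h
  have hpc := hcomp p hp1F hp2S hvp1 hvp2 hpdisj hpuniv
  have hqc := hcomp q hq1F hq2S hvq1 hvq2 hqdisj hquniv
  have key : p.1 = q.1 := by
    by_contra hne
    by_cases hcommon : ∃ a, a ∈ p.1 ∧ a ∈ q.1
    · obtain ⟨c, hc1, hc2⟩ := hcommon
      have honly1 : ∀ a, a ∈ p.1 → a ∈ q.1 → a = c := by
        intro a ha1 ha2
        by_contra hac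
        exact hne (steiner_unique hF hac hp1F hq1F ha1 hc1 ha2 hc2)
      -- decompose p.1 = {c, x, y}
      have hcardp1 : p.1.card = 3 := hF.1 _ hp1F
      obtain ⟨x, y, hxy, hxyeq⟩ := Finset.card_eq_two.mp
        (by rw [Finset.card_erase_of_mem hc1, hcardp1] : (p.1.erase c).card = 2)
      have hxp1 : x ∈ p.1 := Finset.mem_of_mem_erase (hxyeq ▸ (by simp : x ∈ ({x,y} : Finset V)))
      have hyp1 : y ∈ p.1 := Finset.mem_of_mem_erase (hxyeq ▸ (by simp : y ∈ ({x,y} : Finset V)))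
      have hxc : x ≠ c := Finset.ne_of_mem_erase (hxyeq ▸ (by simp : x ∈ ({x,y} : Finset V)))
      have hyc : y ≠ c := Finset.ne_of_mem_erase (hxyeq ▸ (by simp : y ∈ ({x,y} : Finset V)))
      have hp1eq : p.1 = {c, x, y} := by
        rw [← Finset.insert_erase hc1, hxyeq]
      -- decompose q.1 = {c, u, w}
      have hcardq1 : q.1.card = 3 := hF.1 _ hq1F
      obtain ⟨u, w, huw, huweq⟩ := Finset.card_eq_two.mp
        (by rw [Finset.card_erase_of_mem hc2, hcardq1] : (q.1.erase c).card = 2)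
      have huq1 : u ∈ q.1 := Finset.mem_of_mem_erase (huweq ▸ (by simp : u ∈ ({u,w} : Finset V)))
      have hwq1 : w ∈ q.1 := Finset.mem_of_mem_erase (huweq ▸ (by simp : w ∈ ({u,w} : Finset V)))
      have huc : u ≠ c := Finset.ne_of_mem_erase (huweq ▸ (by simp : u ∈ ({u,w} : Finset V)))
      have hwc : w ≠ c := Finset.ne_of_mem_erase (huweq ▸ (by simp : w ∈ ({u,w} : Finset V)))
      have hq1eq : q.1 = {c, u, w} := by
        rw [← Finset.insert_erase hc2, huweq]
      -- cross non-memberships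
      have hxq1 : x ∉ q.1 := fun h => hxc (honly1 x hxp1 h)
      have hyq1 : y ∉ q.1 := fun h => hyc (honly1 y hyp1 h)
      have hup1 : u ∉ p.1 := fun h => huc (honly1 u h huq1)
      have hwp1 : w ∉ p.1 := fun h => hwc (honly1 w h hwq1)
      -- u, w ∈ p.2
      have hup2 : u ∈ p.2 := by
        rw [hpc]
        simp only [Finset.mem_sdiff, Finset.mem_univ, true_and, Finset.mem_insert, not_or]
        exact ⟨fun h => hvq1 (h ▸ huq1), hup1⟩
      have hwp2 : w ∈ p.2 := by
        rw [hpc]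
        simp only [Finset.mem_sdiff, Finset.mem_univ, true_and, Finset.mem_insert, not_or]
        exact ⟨fun h => hvq1 (h ▸ hwq1), hwp1⟩
      -- extract the sixth point qq
      have hp2card : p.2.card = 3 := hS.1 _ hp2S
      have hwe : w ∈ p.2.erase u := Finset.mem_erase.mpr ⟨fun h => huw (h.symm), hwp2⟩
      have h1 : ((p.2.erase u).erase w).card = 1 := by
        rw [Finset.card_erase_of_mem hwe, Finset.card_erase_of_mem hup2, hp2card]
      obtain ⟨qq, hqqeq⟩ := Finset.card_eq_one.mp h1
      have hqqmem : qq ∈ (p.2.erase u).erase w := hqqeq ▸ Finset.mem_singleton_self qq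
      have hqqw : qq ≠ w := (Finset.mem_erase.mp hqqmem).1
      have hqqu : qq ≠ u := (Finset.mem_erase.mp (Finset.mem_of_mem_erase hqqmem)).1
      have hqqp2 : qq ∈ p.2 := Finset.mem_of_mem_erase (Finset.mem_of_mem_erase hqqmem)
      have hp2eq : p.2 = {u, w, qq} := by
        rw [← Finset.insert_erase hup2, ← Finset.insert_erase hwe, hqqeq]
      -- qq properties
      have hqqnotins : qq ∉ insert v p.1 := by
        rw [hpc] at hqqp2
        exact (Finset.mem_sdiff.mp hqqp2).2
      simp only [Finset.mem_insert, not_or] at hqqnotins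
      have hqqv : qq ≠ v := hqqnotins.1
      have hqqp1 : qq ∉ p.1 := hqqnotins.2
      have hqqc : qq ≠ c := fun h => hqqp1 (h ▸ hc1)
      have hqqx : qq ≠ x := fun h => hqqp1 (h ▸ hxp1)
      have hqqy : qq ≠ y := fun h => hqqp1 (h ▸ hyp1)
      -- q.2 = {x, y, qq}
      have hxq2 : x ∈ q.2 := by
        rw [hqc]
        simp only [Finset.mem_sdiff, Finset.mem_univ, true_and, Finset.mem_insert, not_or]
        exact ⟨fun h => hvp1 (h ▸ hxp1), hxq1⟩
      have hyq2 : y ∈ q.2 := by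
        rw [hqc]
        simp only [Finset.mem_sdiff, Finset.mem_univ, true_and, Finset.mem_insert, not_or]
        exact ⟨fun h => hvp1 (h ▸ hyp1), hyq1⟩
      have hqqq2 : qq ∈ q.2 := by
        rw [hqc]
        simp only [Finset.mem_sdiff, Finset.mem_univ, true_and, Finset.mem_insert, not_or]
        refine ⟨hqqv, ?_⟩
        rw [hq1eq]
        simp only [Finset.mem_insert, Finset.mem_singleton, not_or]
        exact ⟨hqqc, hqqu, hqqw⟩
      have hsub : ({x, y, qq} : Finset V) ⊆ q.2 := by
        intro a ha
        simp only [Finset.mem_insert, Finset.mem_singleton] at ha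
        rcases ha with rfl | rfl | rfl <;> assumption
      have hxyqcard : ({x, y, qq} : Finset V).card = 3 := by
        have h1 : x ∉ ({y, qq} : Finset V) := by
          simp only [Finset.mem_insert, Finset.mem_singleton]
          push_neg
          exact ⟨hxy, fun h => hqqx h.symm⟩
        have h2 : y ∉ ({qq} : Finset V) := by
          rw [Finset.mem_singleton]
          exact fun h => hqqy h.symm
        rw [Finset.card_insert_of_notMem h1, Finset.card_insert_of_notMem h2,
          Finset.card_singleton]
      have hq2eq : q.2 = {x, y, qq} :=
        (Finset.eq_of_subset_of_card_le hsub (by rw [hS.1 _ hq2S, hxyqcard])).symm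
      -- apply orthogonality
      have hpairne : ({x, y} : Finset V) ≠ {u, w} := by
        intro h
        have hx : x ∈ ({x, y} : Finset V) := Finset.mem_insert_self x {y}
        rw [h] at hx
        rcases Finset.mem_insert.mp hx with rfl | hx'
        · exact hxq1 huq1
        · rw [Finset.mem_singleton] at hx'
          subst hx'
          exact hxq1 hwq1
      have hFxy : ({x, y, c} : Finset V) ∈ F := by
        have : ({x, y, c} : Finset V) = p.1 := by
          rw [hp1eq]; ext a; simp only [Finset.mem_insert, Finset.mem_singleton]; tauto
        rwa [this]
      have hFuw : ({u, w, c} : Finset V) ∈ F := by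
        have : ({u, w, c} : Finset V) = q.1 := by
          rw [hq1eq]; ext a; simp only [Finset.mem_insert, Finset.mem_singleton]; tauto
        rwa [this]
      have hSxy : ({x, y, qq} : Finset V) ∈ S := hq2eq ▸ hq2S
      have hSuw : ({u, w, qq} : Finset V) ∈ S := hp2eq ▸ hp2S
      exact horth.2 x y c u w qq qq hpairne hFxy hFuw hSxy hSuw rfl
    · push_neg at hcommon
      have hsub : q.1 ⊆ p.2 := by
        intro a ha
        rw [hpc]
        simp only [Finset.mem_sdiff, Finset.mem_univ, true_and, Finset.mem_insert, not_or]
        exact ⟨fun h => hvq1 (h ▸ ha), fun h => hcommon a h ha⟩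
      have : q.1 = p.2 :=
        Finset.eq_of_subset_of_card_le hsub (by rw [hF.1 _ hq1F, hS.1 _ hp2S])
      exact horth.1 q.1 ⟨hq1F, this ▸ hp2S⟩
  have key2 : p.2 = q.2 := by rw [hpc, hqc, key]
  exact Prod.ext key key2

end Aux

/-- For orthogonal Fano planes `F`, `S`: every block of `F` is disjoint from a
unique block of `S`, and every point `v` together with a unique block of `F` and
a unique block of `S` partitions the point set. -/
theorem orthogonal_disjoint_block_and_partition {V : Type*} [DecidableEq V] [Fintype V]
    (F S : Finset (Finset V)) (hF : IsFano F) (hS : IsFano S) (horth : OrthogonalSTS F S) :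
    (∀ b ∈ F, ∃! t : Finset V, t ∈ S ∧ Disjoint b t) ∧
    (∀ v : V, ∃! p : Finset V × Finset V, p.1 ∈ F ∧ p.2 ∈ S ∧
      v ∉ p.1 ∧ v ∉ p.2 ∧ Disjoint p.1 p.2 ∧ insert v (p.1 ∪ p.2) = Finset.univ) := by
  obtain ⟨h7, hFs⟩ := hF
  obtain ⟨-, hSs⟩ := hS
  have part1 : ∀ b ∈ F, ∃! t : Finset V, t ∈ S ∧ Disjoint b t := by
    intro b hb
    have hc := disjoint_count h7 hFs hSs horth.1 hb
    obtain ⟨t, ht⟩ := Finset.card_eq_one.mp hc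
    have htmem : t ∈ S.filter (fun t => Disjoint b t) := ht ▸ Finset.mem_singleton_self t
    rw [Finset.mem_filter] at htmem
    refine ⟨t, htmem, ?_⟩
    intro t' ht'
    have : t' ∈ S.filter (fun t => Disjoint b t) := Finset.mem_filter.mpr ht'
    rw [ht, Finset.mem_singleton] at this
    exact this
  refine ⟨part1, ?_⟩
  -- existence of the missing point for each disjoint pair
  have hcond : ∀ b ∈ F, ∀ t ∈ S, Disjoint b t → ∃ w : V, b ∈ F ∧ t ∈ S ∧
      w ∉ b ∧ w ∉ t ∧ Disjoint b t ∧ insert w (b ∪ t) = Finset.univ := by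
    intro b hb t ht hdisj
    have hcard : (b ∪ t).card = 6 := by
      rw [Finset.card_union_of_disjoint hdisj, hFs.1 b hb, hSs.1 t ht]
    have h1 : (Finset.univ \ (b ∪ t)).card = 1 := by
      rw [Finset.card_sdiff_of_subset (Finset.subset_univ _), Finset.card_univ, h7, hcard]
    obtain ⟨w, hw⟩ := Finset.card_eq_one.mp h1
    have hwmem : w ∈ Finset.univ \ (b ∪ t) := hw ▸ Finset.mem_singleton_self w
    rw [Finset.mem_sdiff, Finset.mem_union] at hwmem
    have hwb : w ∉ b := fun h => hwmem.2 (Or.inl h)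
    have hwt : w ∉ t := fun h => hwmem.2 (Or.inr h)
    refine ⟨w, hb, ht, hwb, hwt, hdisj, ?_⟩
    apply Finset.eq_of_subset_of_card_le (Finset.subset_univ _)
    rw [Finset.card_insert_of_notMem (by rw [Finset.mem_union]; tauto), hcard,
      Finset.card_univ, h7]
  have hEach : ∀ b ∈ F, ∃ w : V, ∃ t : Finset V, b ∈ F ∧ t ∈ S ∧
      w ∉ b ∧ w ∉ t ∧ Disjoint b t ∧ insert w (b ∪ t) = Finset.univ := by
    intro b hb
    obtain ⟨t, ⟨htS, htd⟩, -⟩ := part1 b hb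
    obtain ⟨w, hw⟩ := hcond b hb t htS htd
    exact ⟨w, t, hw⟩
  -- existence part
  have hexist : ∀ v : V, ∃ p : Finset V × Finset V, p.1 ∈ F ∧ p.2 ∈ S ∧
      v ∉ p.1 ∧ v ∉ p.2 ∧ Disjoint p.1 p.2 ∧ insert v (p.1 ∪ p.2) = Finset.univ := by
    by_contra hno
    push_neg at hno
    obtain ⟨v0, hv0⟩ := hno
    classical
    let f : Finset V → V := fun b => if hb : b ∈ F then (hEach b hb).choose else v0
    have hmaps : ∀ b ∈ F, f b ∈ Finset.univ.erase v0 := by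
      intro b hb
      obtain ⟨t, hspec⟩ := (hEach b hb).choose_spec
      rw [Finset.mem_erase]
      refine ⟨?_, Finset.mem_univ _⟩
      intro heq
      have hfb : f b = (hEach b hb).choose := dif_pos hb
      apply hv0 (b, t) hspec.1 hspec.2.1
      · rw [← hfb, heq] at hspec; exact hspec.2.2.1
      · rw [← hfb, heq] at hspec; exact hspec.2.2.2.1
      · exact hspec.2.2.2.2.1
      · rw [← hfb, heq] at hspec; exact hspec.2.2.2.2.2
    have hlt : (Finset.univ.erase v0).card < F.card := by
      rw [Finset.card_erase_of_mem (Finset.mem_univ v0), Finset.card_univ, h7,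
        card_blocks h7 hFs]
      omega
    obtain ⟨b1, hb1, b2, hb2, hne, heqf⟩ :=
      Finset.exists_ne_map_eq_of_card_lt_of_maps_to hlt hmaps
    obtain ⟨t1, hs1⟩ := (hEach b1 hb1).choose_spec
    obtain ⟨t2, hs2⟩ := (hEach b2 hb2).choose_spec
    have hf1 : f b1 = (hEach b1 hb1).choose := dif_pos hb1
    have hf2 : f b2 = (hEach b2 hb2).choose := dif_pos hb2
    rw [← hf1] at hs1
    rw [← hf2, ← heqf] at hs2
    have := part2_unique h7 hFs hSs horth (f b1) (b1, t1) (b2, t2)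
      ⟨hs1.1, hs1.2.1, hs1.2.2.1, hs1.2.2.2.1, hs1.2.2.2.2.1, hs1.2.2.2.2.2⟩
      ⟨hs2.1, hs2.2.1, hs2.2.2.1, hs2.2.2.2.1, hs2.2.2.2.2.1, hs2.2.2.2.2.2⟩
    exact hne (congrArg Prod.fst this)
  intro v
  obtain ⟨p, hp⟩ := hexist v
  exact ⟨p, hp, fun q hq => part2_unique h7 hFs hSs horth v q p hq hp⟩
end

section
/- Let (F,→) be an oriented Fano plane with point set V. For each v ∈ V let T(v) be the set of the three points x with x → v. Then the family { T(v) : v ∈ V } is the block set of a Fano plane F_→ on V, and F_→ is orthogonal to F. -/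
/-- An orientation on a Fano plane `B`: an antisymmetric relation that cyclically
orients every block, and such that for every point `x` the three out-neighbors of
`x` on the three blocks through `x` themselves form a block. -/
def IsOrientation {V : Type*} [DecidableEq V] (B : Finset (Finset V)) (r : V → V → Prop) : Prop :=
  (∀ x y : V, r x y → ¬ r y x) ∧
  (∀ x1 x2 x3 : V, ({x1, x2, x3} : Finset V) ∈ B →
    (r x1 x2 ∧ r x2 x3 ∧ r x3 x1) ∨ (r x1 x3 ∧ r x3 x2 ∧ r x2 x1)) ∧
  (∀ x y1 z1 y2 z2 y3 z3 : V,
    ({x, y1, z1} : Finset V) ∈ B → ({x, y2, z2} : Finset V) ∈ B → ({x, y3, z3} : Finset V) ∈ B →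
    ({x, y1, z1} : Finset V) ≠ ({x, y2, z2} : Finset V) →
    ({x, y1, z1} : Finset V) ≠ ({x, y3, z3} : Finset V) →
    ({x, y2, z2} : Finset V) ≠ ({x, y3, z3} : Finset V) →
    r x y1 → r x y2 → r x y3 → ({y1, y2, y3} : Finset V) ∈ B)

open scoped Classical in
/-- The block family `T(v) = { x | x → v }`, `v ∈ V`, associated with an
orientation `r` (written `F_→` in the paper). -/
noncomputable def orientBlocks {V : Type*} [DecidableEq V] [Fintype V] (r : V → V → Prop) :
    Finset (Finset V) :=
  Finset.univ.image (fun v => Finset.univ.filter (fun x => r x v))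

set_option linter.unusedSectionVars false

section
variable {V : Type*} [DecidableEq V] [Fintype V]

lemma pair_unique {B : Finset (Finset V)} (hB : IsSteiner B) {x y : V} (hxy : x ≠ y)
    {b b' : Finset V} (hb : b ∈ B) (hb' : b' ∈ B) (hxb : x ∈ b) (hyb : y ∈ b)
    (hxb' : x ∈ b') (hyb' : y ∈ b') : b = b' := by
  obtain ⟨c, -, hu⟩ := hB.2 x y hxy
  rw [hu b ⟨hb, hxb, hyb⟩, hu b' ⟨hb', hxb', hyb'⟩]

lemma block_decomp {B : Finset (Finset V)} (hB : IsSteiner B) {b : Finset V} (hb : b ∈ B)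
    {x y : V} (hx : x ∈ b) (hy : y ∈ b) (hxy : x ≠ y) :
    ∃ z, b = {x, y, z} ∧ z ≠ x ∧ z ≠ y := by
  have hcard : b.card = 3 := hB.1 b hb
  have hsub : ({x, y} : Finset V) ⊆ b := by
    intro u hu; simp at hu; rcases hu with rfl | rfl <;> assumption
  have h2 : ({x, y} : Finset V).card = 2 := by simp [hxy]
  have h1 : (b \ {x, y}).card = 1 := by
    rw [Finset.card_sdiff_of_subset hsub, hcard, h2]
  obtain ⟨z, hz⟩ := Finset.card_eq_one.mp h1
  have hzmem : z ∈ b \ ({x, y} : Finset V) := hz ▸ Finset.mem_singleton_self z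
  have hzb : z ∈ b := (Finset.mem_sdiff.mp hzmem).1
  have hzxy : z ≠ x ∧ z ≠ y := by
    have := (Finset.mem_sdiff.mp hzmem).2
    simp at this; exact ⟨this.1, this.2⟩
  refine ⟨z, ?_, hzxy.1, hzxy.2⟩
  apply Finset.eq_of_subset_of_card_le ?_ ?_ |>.symm
  · intro u hu; simp at hu
    rcases hu with rfl | rfl | rfl <;> assumption
  · rw [hcard]
    exact le_of_eq (Finset.card_eq_three.mpr ⟨x, y, z, hxy, hzxy.1.symm, hzxy.2.symm, rfl⟩).symm

lemma eq_triple_of_mem {B : Finset (Finset V)} (hB : IsSteiner B) {b : Finset V} (hb : b ∈ B)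
    {x y z : V} (hx : x ∈ b) (hy : y ∈ b) (hz : z ∈ b)
    (hxy : x ≠ y) (hxz : x ≠ z) (hyz : y ≠ z) : b = {x, y, z} := by
  obtain ⟨w, rfl, hwx, hwy⟩ := block_decomp hB hb hx hy hxy
  have : z = w := by
    simp at hz
    rcases hz with rfl | rfl | rfl
    · exact absurd rfl hxz
    · exact absurd rfl hyz
    · rfl
  subst this; rfl

end

section
set_option linter.unusedSectionVars false
variable {V : Type*} [DecidableEq V] [Fintype V]

variable {B : Finset (Finset V)} {r : V → V → Prop}

lemma no_self (hr : IsOrientation B r) (v : V) : ¬ r v v :=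
  fun h => hr.1 v v h h

lemma block_orient_core (hr : IsOrientation B r) {v s t : V}
    (hb : ({v, s, t} : Finset V) ∈ B) (hvs : v ≠ s) (hvt : v ≠ t) (hst : s ≠ t) :
    ∃ p q, p ∈ ({v, s, t} : Finset V) ∧ q ∈ ({v, s, t} : Finset V) ∧ p ≠ v ∧ q ≠ v ∧ p ≠ q ∧
      r v p ∧ r q v ∧
      (∀ u ∈ ({v, s, t} : Finset V), r v u → u = p) ∧
      (∀ u ∈ ({v, s, t} : Finset V), r u v → u = q) := by
  rcases hr.2.1 v s t hb with ⟨h1, h2, h3⟩ | ⟨h1, h2, h3⟩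
  · refine ⟨s, t, by simp, by simp, hvs.symm, hvt.symm, hst, h1, h3, ?_, ?_⟩
    · intro u hu hru; simp at hu
      rcases hu with rfl | rfl | rfl
      · exact absurd hru (no_self hr u)
      · rfl
      · exact absurd hru (hr.1 u v h3)
    · intro u hu hru; simp at hu
      rcases hu with rfl | rfl | rfl
      · exact absurd hru (no_self hr u)
      · exact absurd hru (hr.1 v u h1)
      · rfl
  · refine ⟨t, s, by simp, by simp, hvt.symm, hvs.symm, hst.symm, h1, h3, ?_, ?_⟩
    · intro u hu hru; simp at hu
      rcases hu with rfl | rfl | rfl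
      · exact absurd hru (no_self hr u)
      · exact absurd hru (hr.1 u v h3)
      · rfl
    · intro u hu hru; simp at hu
      rcases hu with rfl | rfl | rfl
      · exact absurd hru (no_self hr u)
      · rfl
      · exact absurd hru (hr.1 v u h1)

lemma block_orient (hB : IsSteiner B) (hr : IsOrientation B r) {b : Finset V} (hb : b ∈ B)
    {v : V} (hv : v ∈ b) :
    ∃ p q, p ∈ b ∧ q ∈ b ∧ p ≠ v ∧ q ≠ v ∧ p ≠ q ∧ r v p ∧ r q v ∧
      (∀ u ∈ b, r v u → u = p) ∧ (∀ u ∈ b, r u v → u = q) := by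
  obtain ⟨a, c, d, hac, had, hcd, rfl⟩ := Finset.card_eq_three.mp (hB.1 b hb)
  simp only [Finset.mem_insert, Finset.mem_singleton] at hv
  rcases hv with rfl | rfl | rfl
  · exact block_orient_core hr hb hac had hcd
  · have he : ({a, v, d} : Finset V) = ({v, a, d} : Finset V) := by
      ext u; simp; tauto
    rw [he] at hb ⊢
    exact block_orient_core hr hb hac.symm hcd had
  · have he : ({a, c, v} : Finset V) = ({v, a, c} : Finset V) := by
      ext u; simp; tauto
    rw [he] at hb ⊢
    exact block_orient_core hr hb had.symm hcd.symm hac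

end

section
set_option linter.unusedSectionVars false
variable {V : Type*} [DecidableEq V] [Fintype V]
variable {B : Finset (Finset V)} {r : V → V → Prop}

lemma exists_outside (h7 : Fintype.card V = 7) {s : Finset V} (hs : s.card < 7) :
    ∃ w, w ∉ s := by
  have : (sᶜ).Nonempty := by
    rw [← Finset.card_pos, Finset.card_compl, h7]
    omega
  obtain ⟨w, hw⟩ := this
  exact ⟨w, Finset.mem_compl.mp hw⟩

lemma r_total (hB : IsSteiner B) (hr : IsOrientation B r) {x y : V} (hxy : x ≠ y) :
    r x y ∨ r y x := by
  obtain ⟨b, ⟨hb, hxb, hyb⟩, -⟩ := hB.2 x y hxy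
  obtain ⟨z, rfl, -, -⟩ := block_decomp hB hb hxb hyb hxy
  rcases hr.2.1 x y z (by assumption) with ⟨h1, -, -⟩ | ⟨-, -, h3⟩
  · exact Or.inl h1
  · exact Or.inr h3

lemma mem_of_mem_two_blocks (hB : IsSteiner B) {b b' : Finset V} (hb : b ∈ B) (hb' : b' ∈ B)
    (hne : b ≠ b') {u v : V} (hv : v ∈ b) (hv' : v ∈ b') (hu : u ∈ b) (hu' : u ∈ b') :
    u = v := by
  by_contra h
  exact hne (pair_unique hB h hb hb' hu hv hu' hv')

lemma three_blocks (h7 : Fintype.card V = 7) (hB : IsSteiner B) (v : V) :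
    ∃ b1 b2 b3, b1 ∈ B ∧ b2 ∈ B ∧ b3 ∈ B ∧ v ∈ b1 ∧ v ∈ b2 ∧ v ∈ b3 ∧
      b1 ≠ b2 ∧ b1 ≠ b3 ∧ b2 ≠ b3 ∧ b1 ∪ b2 ∪ b3 = Finset.univ := by
  obtain ⟨w1, hw1⟩ := exists_outside h7 (s := {v}) (by simp)
  rw [Finset.mem_singleton] at hw1
  obtain ⟨b1, ⟨hb1, hv1, hw1b⟩, -⟩ := hB.2 v w1 (Ne.symm hw1)
  obtain ⟨w2, hw2⟩ := exists_outside h7 (s := b1) (by rw [hB.1 b1 hb1]; omega)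
  obtain ⟨b2, ⟨hb2, hv2, hw2b⟩, -⟩ := hB.2 v w2 (fun h => hw2 (h ▸ hv1))
  have hne12 : b1 ≠ b2 := fun h => hw2 (h ▸ hw2b)
  obtain ⟨w3, hw3⟩ := exists_outside h7 (s := b1 ∪ b2)
    ((Finset.card_union_le _ _).trans_lt (by rw [hB.1 b1 hb1, hB.1 b2 hb2]; omega))
  simp only [Finset.mem_union, not_or] at hw3
  obtain ⟨b3, ⟨hb3, hv3, hw3b⟩, -⟩ := hB.2 v w3 (fun h => hw3.1 (h ▸ hv1))
  have hne13 : b1 ≠ b3 := fun h => hw3.1 (h ▸ hw3b)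
  have hne23 : b2 ≠ b3 := fun h => hw3.2 (h ▸ hw3b)
  refine ⟨b1, b2, b3, hb1, hb2, hb3, hv1, hv2, hv3, hne12, hne13, hne23, ?_⟩
  have hi12 : b1 ∩ b2 = {v} := by
    ext u
    simp only [Finset.mem_inter, Finset.mem_singleton]
    constructor
    · rintro ⟨h1, h2⟩; exact mem_of_mem_two_blocks hB hb1 hb2 hne12 hv1 hv2 h1 h2
    · rintro rfl; exact ⟨hv1, hv2⟩
  have hi3 : (b1 ∪ b2) ∩ b3 = {v} := by
    ext u
    simp only [Finset.mem_inter, Finset.mem_union, Finset.mem_singleton]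
    constructor
    · rintro ⟨h1 | h1, h2⟩
      · exact mem_of_mem_two_blocks hB hb1 hb3 hne13 hv1 hv3 h1 h2
      · exact mem_of_mem_two_blocks hB hb2 hb3 hne23 hv2 hv3 h1 h2
    · rintro rfl; exact ⟨Or.inl hv1, hv3⟩
  have hc12 : (b1 ∪ b2).card = 5 := by
    have := Finset.card_union_add_card_inter b1 b2
    rw [hi12, hB.1 b1 hb1, hB.1 b2 hb2] at this
    simpa using this
  have hc : (b1 ∪ b2 ∪ b3).card = 7 := by
    have := Finset.card_union_add_card_inter (b1 ∪ b2) b3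
    rw [hi3, hc12, hB.1 b3 hb3] at this
    simpa using this
  exact Finset.eq_univ_of_card _ (by rw [hc, h7])

end

section
set_option linter.unusedSectionVars false
variable {V : Type*} [DecidableEq V] [Fintype V]
variable {B : Finset (Finset V)} {r : V → V → Prop}

open scoped Classical in
lemma neighbor_structure (h7 : Fintype.card V = 7) (hB : IsSteiner B)
    (hr : IsOrientation B r) (v : V) :
    ∃ p1 p2 p3 q1 q2 q3 : V,
      (Finset.univ.filter (fun u => r v u)) = {p1, p2, p3} ∧
      (Finset.univ.filter (fun u => r u v)) = {q1, q2, q3} ∧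
      p1 ≠ p2 ∧ p1 ≠ p3 ∧ p2 ≠ p3 ∧ q1 ≠ q2 ∧ q1 ≠ q3 ∧ q2 ≠ q3 ∧
      ({p1, p2, p3} : Finset V) ∈ B := by
  obtain ⟨b1, b2, b3, hb1, hb2, hb3, hv1, hv2, hv3, h12, h13, h23, huniv⟩ :=
    three_blocks h7 hB v
  obtain ⟨p1, q1, hp1, hq1, hp1v, hq1v, hpq1, hrp1, hrq1, hup1, huq1⟩ :=
    block_orient hB hr hb1 hv1
  obtain ⟨p2, q2, hp2, hq2, hp2v, hq2v, hpq2, hrp2, hrq2, hup2, huq2⟩ :=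
    block_orient hB hr hb2 hv2
  obtain ⟨p3, q3, hp3, hq3, hp3v, hq3v, hpq3, hrp3, hrq3, hup3, huq3⟩ :=
    block_orient hB hr hb3 hv3
  have key : ∀ (a b : V) (ba bb : Finset V), ba ∈ B → bb ∈ B → ba ≠ bb →
      v ∈ ba → v ∈ bb → a ∈ ba → b ∈ bb → a ≠ v → a = b → False := by
    intro a b ba bb hba hbb hne hva hvb ha hb hav heq
    exact hav (mem_of_mem_two_blocks hB hba hbb hne hva hvb ha (heq ▸ hb))
  have hpp12 : p1 ≠ p2 := fun h => key p1 p2 b1 b2 hb1 hb2 h12 hv1 hv2 hp1 hp2 hp1v h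
  have hpp13 : p1 ≠ p3 := fun h => key p1 p3 b1 b3 hb1 hb3 h13 hv1 hv3 hp1 hp3 hp1v h
  have hpp23 : p2 ≠ p3 := fun h => key p2 p3 b2 b3 hb2 hb3 h23 hv2 hv3 hp2 hp3 hp2v h
  have hqq12 : q1 ≠ q2 := fun h => key q1 q2 b1 b2 hb1 hb2 h12 hv1 hv2 hq1 hq2 hq1v h
  have hqq13 : q1 ≠ q3 := fun h => key q1 q3 b1 b3 hb1 hb3 h13 hv1 hv3 hq1 hq3 hq1v h
  have hqq23 : q2 ≠ q3 := fun h => key q2 q3 b2 b3 hb2 hb3 h23 hv2 hv3 hq2 hq3 hq2v h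
  have hmem : ∀ u : V, u ∈ b1 ∨ u ∈ b2 ∨ u ∈ b3 := by
    intro u
    have : u ∈ b1 ∪ b2 ∪ b3 := huniv ▸ Finset.mem_univ u
    simpa [Finset.mem_union, or_assoc] using this
  have hPfilter : (Finset.univ.filter (fun u => r v u)) = {p1, p2, p3} := by
    ext u
    simp only [Finset.mem_filter, Finset.mem_univ, true_and, Finset.mem_insert,
      Finset.mem_singleton]
    constructor
    · intro hru
      rcases hmem u with h | h | h
      · exact Or.inl (hup1 u h hru)
      · exact Or.inr (Or.inl (hup2 u h hru))
      · exact Or.inr (Or.inr (hup3 u h hru))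
    · rintro (rfl | rfl | rfl) <;> assumption
  have hQfilter : (Finset.univ.filter (fun u => r u v)) = {q1, q2, q3} := by
    ext u
    simp only [Finset.mem_filter, Finset.mem_univ, true_and, Finset.mem_insert,
      Finset.mem_singleton]
    constructor
    · intro hru
      rcases hmem u with h | h | h
      · exact Or.inl (huq1 u h hru)
      · exact Or.inr (Or.inl (huq2 u h hru))
      · exact Or.inr (Or.inr (huq3 u h hru))
    · rintro (rfl | rfl | rfl) <;> assumption
  have he1 : b1 = {v, p1, q1} := eq_triple_of_mem hB hb1 hv1 hp1 hq1 (Ne.symm hp1v) (Ne.symm hq1v) hpq1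
  have he2 : b2 = {v, p2, q2} := eq_triple_of_mem hB hb2 hv2 hp2 hq2 (Ne.symm hp2v) (Ne.symm hq2v) hpq2
  have he3 : b3 = {v, p3, q3} := eq_triple_of_mem hB hb3 hv3 hp3 hq3 (Ne.symm hp3v) (Ne.symm hq3v) hpq3
  rw [he1] at hb1 h12 h13
  rw [he2] at hb2 h12 h23
  rw [he3] at hb3 h13 h23
  exact ⟨p1, p2, p3, q1, q2, q3, hPfilter, hQfilter, hpp12, hpp13, hpp23, hqq12, hqq13, hqq23,
    hr.2.2 v p1 q1 p2 q2 p3 q3 hb1 hb2 hb3 h12 h13 h23 hrp1 hrp2 hrp3⟩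

end

section
set_option linter.unusedSectionVars false
variable {V : Type*} [DecidableEq V] [Fintype V]
variable {B : Finset (Finset V)} {r : V → V → Prop}

lemma blocks_meet (h7 : Fintype.card V = 7) (hB : IsSteiner B)
    {b b' : Finset V} (hb : b ∈ B) (hb' : b' ∈ B) (hne : b ≠ b') :
    ∃ p, p ∈ b ∧ p ∈ b' := by
  by_contra hdisj
  push_neg at hdisj
  obtain ⟨a1, a2, a3, h12, h13, h23, hbeq⟩ := Finset.card_eq_three.mp (hB.1 b hb)
  obtain ⟨w1, w2, w3, g12, g13, g23, hbeq'⟩ := Finset.card_eq_three.mp (hB.1 b' hb')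
  have ha1 : a1 ∈ b := by rw [hbeq]; simp
  have ha2 : a2 ∈ b := by rw [hbeq]; simp
  have ha3 : a3 ∈ b := by rw [hbeq]; simp
  have hw1 : w1 ∈ b' := by rw [hbeq']; simp
  have hw2 : w2 ∈ b' := by rw [hbeq']; simp
  have hw3 : w3 ∈ b' := by rw [hbeq']; simp
  have cross : ∀ a ∈ b, ∀ w ∈ b', a ≠ w := by
    rintro a ha w hw rfl
    exact hdisj a ha hw
  -- blocks through w1 and a_i
  obtain ⟨c1, ⟨hc1, hw1c1, ha1c1⟩, -⟩ := hB.2 w1 a1 (cross a1 ha1 w1 hw1).symm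
  obtain ⟨c2, ⟨hc2, hw1c2, ha2c2⟩, -⟩ := hB.2 w1 a2 (cross a2 ha2 w1 hw1).symm
  obtain ⟨t1, hc1eq, ht1w1, ht1a1⟩ := block_decomp hB hc1 hw1c1 ha1c1 (cross a1 ha1 w1 hw1).symm
  obtain ⟨t2, hc2eq, ht2w1, ht2a2⟩ := block_decomp hB hc2 hw1c2 ha2c2 (cross a2 ha2 w1 hw1).symm
  have hcne : c1 ≠ c2 := by
    intro h
    have ha2c1 : a2 ∈ c1 := h ▸ ha2c2
    have : c1 = b := pair_unique hB h12 hc1 hb ha1c1 ha2c1 ha1 ha2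
    exact hdisj w1 (this ▸ hw1c1) hw1
  have tavoid : ∀ t ∈ ({t1, t2} : Finset V), t ∉ ({a1, a2, a3, w1, w2, w3} : Finset V) := by
    have key : ∀ (t : V) (c : Finset V) (a : V), c ∈ B → w1 ∈ c → a ∈ c → a ∈ b →
        t ∈ c → t ≠ w1 → t ≠ a → t ∉ ({a1, a2, a3, w1, w2, w3} : Finset V) := by
      intro t c a hc hw1c hac hab htc htw1 hta hmem
      simp only [Finset.mem_insert, Finset.mem_singleton] at hmem
      have hbmem : t ∈ b → False := by
        intro htb
        have : c = b := pair_unique hB (by rintro rfl; exact hta rfl : a ≠ t)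
          hc hb hac htc hab htb
        exact hdisj w1 (this ▸ hw1c) hw1
      have hbmem' : t ∈ b' → t ≠ w1 → False := by
        intro htb' _
        have : c = b' := pair_unique hB htw1 hc hb' htc hw1c htb' hw1
        exact hdisj a hab (this ▸ hac)
      rcases hmem with rfl | rfl | rfl | rfl | rfl | rfl
      · exact hbmem ha1
      · exact hbmem ha2
      · exact hbmem ha3
      · exact htw1 rfl
      · exact hbmem' hw2 htw1
      · exact hbmem' hw3 htw1
    intro t ht
    simp only [Finset.mem_insert, Finset.mem_singleton] at ht
    rcases ht with rfl | rfl
    · exact key t c1 a1 hc1 hw1c1 ha1c1 ha1 (by rw [hc1eq]; simp) ht1w1 ht1a1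
    · exact key t c2 a2 hc2 hw1c2 ha2c2 ha2 (by rw [hc2eq]; simp) ht2w1 ht2a2
  have hScard : ({a1, a2, a3, w1, w2, w3} : Finset V).card = 6 := by
    have n11 : a1 ≠ w1 := cross a1 ha1 w1 hw1
    have n12 : a1 ≠ w2 := cross a1 ha1 w2 hw2
    have n13 : a1 ≠ w3 := cross a1 ha1 w3 hw3
    have n21 : a2 ≠ w1 := cross a2 ha2 w1 hw1
    have n22 : a2 ≠ w2 := cross a2 ha2 w2 hw2
    have n23 : a2 ≠ w3 := cross a2 ha2 w3 hw3
    have n31 : a3 ≠ w1 := cross a3 ha3 w1 hw1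
    have n32 : a3 ≠ w2 := cross a3 ha3 w2 hw2
    have n33 : a3 ≠ w3 := cross a3 ha3 w3 hw3
    rw [Finset.card_insert_of_notMem (by simp [h12, h13, n11, n12, n13]),
      Finset.card_insert_of_notMem (by simp [h23, n21, n22, n23]),
      Finset.card_insert_of_notMem (by simp [n31, n32, n33]),
      Finset.card_insert_of_notMem (by simp [g12, g13]),
      Finset.card_insert_of_notMem (by simp [g23]),
      Finset.card_singleton]
  have hcompl : (({a1, a2, a3, w1, w2, w3} : Finset V)ᶜ).card ≤ 1 := by
    rw [Finset.card_compl, hScard, h7]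
  have ht12 : t1 = t2 := by
    apply Finset.card_le_one.mp hcompl <;> rw [Finset.mem_compl]
    · exact tavoid t1 (by simp)
    · exact tavoid t2 (by simp)
  subst ht12
  have : c1 = c2 := pair_unique hB (Ne.symm ht1w1) hc1 hc2 hw1c1 (by rw [hc1eq]; simp)
    hw1c2 (by rw [hc2eq]; simp)
  exact hcne this

end

section
set_option linter.unusedSectionVars false
variable {V : Type*} [DecidableEq V] [Fintype V]
variable {B : Finset (Finset V)} {r : V → V → Prop}

open scoped Classical in
lemma filter_not_block (h7 : Fintype.card V = 7) (hB : IsSteiner B)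
    (hr : IsOrientation B r) (v : V) :
    Finset.univ.filter (fun x => r x v) ∉ B := by
  intro hbB
  obtain ⟨p1, p2, p3, q1, q2, q3, hP, hQ, hpp12, hpp13, hpp23, hqq12, hqq13, hqq23, hPB⟩ :=
    neighbor_structure h7 hB hr v
  rw [hQ] at hbB
  have hrq : ∀ u : V, u ∈ ({q1, q2, q3} : Finset V) → r u v := by
    intro u hu
    have : u ∈ Finset.univ.filter (fun x => r x v) := hQ ▸ hu
    exact (Finset.mem_filter.mp this).2
  have hrq1 : r q1 v := hrq q1 (by simp)
  have hrq2 : r q2 v := hrq q2 (by simp)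
  have hrq3 : r q3 v := hrq q3 (by simp)
  have hrp : ∀ u : V, u ∈ ({p1, p2, p3} : Finset V) → r v u := by
    intro u hu
    have : u ∈ Finset.univ.filter (fun x => r v x) := hP ▸ hu
    exact (Finset.mem_filter.mp this).2
  have hqv1 : q1 ≠ v := by rintro rfl; exact no_self hr q1 hrq1
  have hqv2 : q2 ≠ v := by rintro rfl; exact no_self hr q2 hrq2
  have hqv3 : q3 ≠ v := by rintro rfl; exact no_self hr q3 hrq3
  -- the blocks through v and q_i, with third points t_i
  have getblock : ∀ q : V, r q v → ∃ c t, c ∈ B ∧ c = ({v, q, t} : Finset V) ∧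
      t ≠ v ∧ t ≠ q ∧ r v t := by
    intro q hq
    have hqv : q ≠ v := by rintro rfl; exact no_self hr q hq
    obtain ⟨c, ⟨hc, hvc, hqc⟩, -⟩ := hB.2 v q hqv.symm
    obtain ⟨t, hceq, htv, htq⟩ := block_decomp hB hc hvc hqc hqv.symm
    refine ⟨c, t, hc, hceq, htv, htq, ?_⟩
    obtain ⟨p, q', hpc, hq'c, hpv, hq'v, hpq', hrvp, hrq'v, hup, huq'⟩ :=
      block_orient hB hr hc hvc
    have hqq' : q = q' := huq' q hqc hq
    have hpt : p = t := by
      rw [hceq] at hpc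
      simp only [Finset.mem_insert, Finset.mem_singleton] at hpc
      rcases hpc with rfl | rfl | rfl
      · exact absurd rfl hpv
      · exact absurd hqq' hpq'
      · rfl
    exact hpt ▸ hrvp
  obtain ⟨c1, t1, hc1, hc1eq, ht1v, ht1q1, hrt1⟩ := getblock q1 hrq1
  obtain ⟨c2, t2, hc2, hc2eq, ht2v, ht2q2, hrt2⟩ := getblock q2 hrq2
  obtain ⟨c3, t3, hc3, hc3eq, ht3v, ht3q3, hrt3⟩ := getblock q3 hrq3
  have htd : ∀ t : V, r v t → t ∈ ({p1, p2, p3} : Finset V) := by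
    intro t ht
    rw [← hP]
    simp [ht]
  have hqt : ∀ q t : V, r q v → r v t → q ≠ t := by
    rintro q t hq ht rfl
    exact hr.1 q v hq ht
  have hq1t1 := hqt q1 t1 hrq1 hrt1
  have hq1t2 := hqt q1 t2 hrq1 hrt2
  have hq1t3 := hqt q1 t3 hrq1 hrt3
  have hq2t1 := hqt q2 t1 hrq2 hrt1
  have hq2t2 := hqt q2 t2 hrq2 hrt2
  have hq2t3 := hqt q2 t3 hrq2 hrt3
  have hq3t1 := hqt q3 t1 hrq3 hrt1
  have hq3t2 := hqt q3 t2 hrq3 hrt2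
  have hq3t3 := hqt q3 t3 hrq3 hrt3
  -- t_i pairwise distinct
  have tdist : ∀ (qa qb ta tb : V) (ca cb : Finset V), ca ∈ B → cb ∈ B →
      ca = ({v, qa, ta} : Finset V) → cb = ({v, qb, tb} : Finset V) →
      ta ≠ v → qb ≠ v → qb ≠ qa → qb ≠ tb → qb ≠ ta → ta = tb → False := by
    intro qa qb ta tb ca cb hca hcb hcaeq hcbeq htav hqbv hqbqa hqbtb hqbta heq
    subst heq
    have : ca = cb := pair_unique hB (Ne.symm htav) hca hcb
      (by rw [hcaeq]; simp) (by rw [hcaeq]; simp) (by rw [hcbeq]; simp) (by rw [hcbeq]; simp)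
    have hqbca : qb ∈ ca := by rw [this, hcbeq]; simp
    rw [hcaeq] at hqbca
    simp only [Finset.mem_insert, Finset.mem_singleton] at hqbca
    rcases hqbca with rfl | rfl | rfl
    · exact hqbv rfl
    · exact hqbqa rfl
    · exact hqbta rfl
  have htt12 : t1 ≠ t2 := fun h =>
    tdist q1 q2 t1 t2 c1 c2 hc1 hc2 hc1eq hc2eq ht1v hqv2 hqq12.symm (Ne.symm ht2q2) hq2t1 h
  have htt13 : t1 ≠ t3 := fun h =>
    tdist q1 q3 t1 t3 c1 c3 hc1 hc3 hc1eq hc3eq ht1v hqv3 hqq13.symm (Ne.symm ht3q3) hq3t1 h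
  have htt23 : t2 ≠ t3 := fun h =>
    tdist q2 q3 t2 t3 c2 c3 hc2 hc3 hc2eq hc3eq ht2v hqv3 hqq23.symm (Ne.symm ht3q3) hq3t2 h
  have hvt1 : v ≠ t1 := fun h => no_self hr v (h ▸ hrt1)
  have hvt2 : v ≠ t2 := fun h => no_self hr v (h ▸ hrt2)
  have hvt3 : v ≠ t3 := fun h => no_self hr v (h ▸ hrt3)
  have ht1d := htd t1 hrt1
  have ht2d := htd t2 hrt2
  have ht3d := htd t3 hrt3
  -- the seven points
  have hScard : ({v, q1, q2, q3, t1, t2, t3} : Finset V).card = 7 := by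
    rw [Finset.card_insert_of_notMem
        (by simp [Ne.symm hqv1, Ne.symm hqv2, Ne.symm hqv3, hvt1, hvt2, hvt3]),
      Finset.card_insert_of_notMem (by simp [hqq12, hqq13, hq1t1, hq1t2, hq1t3]),
      Finset.card_insert_of_notMem (by simp [hqq23, hq2t1, hq2t2, hq2t3]),
      Finset.card_insert_of_notMem (by simp [hq3t1, hq3t2, hq3t3]),
      Finset.card_insert_of_notMem (by simp [htt12, htt13]),
      Finset.card_insert_of_notMem (by simp [htt23]),
      Finset.card_singleton]
  have hSuniv : ({v, q1, q2, q3, t1, t2, t3} : Finset V) = Finset.univ :=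
    Finset.eq_univ_of_card _ (by rw [hScard, h7])
  -- the block through q1 and t2
  obtain ⟨e, ⟨he, hq1e, ht2e⟩, -⟩ := hB.2 q1 t2 hq1t2
  obtain ⟨w, heeq, hwq1, hwt2⟩ := block_decomp hB he hq1e ht2e hq1t2
  have hwe : w ∈ e := by rw [heeq]; simp
  have hwmem : w ∈ ({v, q1, q2, q3, t1, t2, t3} : Finset V) := hSuniv ▸ Finset.mem_univ w
  simp only [Finset.mem_insert, Finset.mem_singleton] at hwmem
  have hq1d : q1 ∉ ({p1, p2, p3} : Finset V) := fun h => hr.1 q1 v hrq1 (hrp q1 h)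
  rcases hwmem with h | h | h | h | h | h | h
  · -- w = v : e contains v, t2 so e = c2, but q1 ∉ c2
    have hwe' : v ∈ e := h ▸ hwe
    have : e = c2 := pair_unique hB hvt2 he hc2 hwe' ht2e (by rw [hc2eq]; simp) (by rw [hc2eq]; simp)
    have : q1 ∈ c2 := this ▸ hq1e
    rw [hc2eq] at this
    simp only [Finset.mem_insert, Finset.mem_singleton] at this
    rcases this with rfl | rfl | rfl
    · exact hqv1 rfl
    · exact hqq12 rfl
    · exact hq1t2 rfl
  · exact hwq1 h
  · -- w = q2 : e contains q1, q2 so e = {q1,q2,q3}, but t2 ∉ it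
    have hwe' : q2 ∈ e := h ▸ hwe
    have : e = ({q1, q2, q3} : Finset V) := pair_unique hB hqq12 he hbB hq1e hwe'
      (by simp) (by simp)
    have : t2 ∈ ({q1, q2, q3} : Finset V) := this ▸ ht2e
    simp only [Finset.mem_insert, Finset.mem_singleton] at this
    rcases this with rfl | rfl | rfl
    · exact hq1t2 rfl
    · exact hq2t2 rfl
    · exact hq3t2 rfl
  · -- w = q3
    have hwe' : q3 ∈ e := h ▸ hwe
    have : e = ({q1, q2, q3} : Finset V) := pair_unique hB hqq13 he hbB hq1e hwe'
      (by simp) (by simp)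
    have : t2 ∈ ({q1, q2, q3} : Finset V) := this ▸ ht2e
    simp only [Finset.mem_insert, Finset.mem_singleton] at this
    rcases this with rfl | rfl | rfl
    · exact hq1t2 rfl
    · exact hq2t2 rfl
    · exact hq3t2 rfl
  · -- w = t1 : e contains t1, t2 so e = d, but q1 ∉ d
    have hwe' : t1 ∈ e := h ▸ hwe
    have : e = ({p1, p2, p3} : Finset V) := pair_unique hB (Ne.symm htt12) he hPB
      ht2e hwe' ht2d ht1d
    exact hq1d (this ▸ hq1e)
  · exact hwt2 h
  · -- w = t3
    have hwe' : t3 ∈ e := h ▸ hwe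
    have : e = ({p1, p2, p3} : Finset V) := pair_unique hB htt23 he hPB
      ht2e hwe' ht2d ht3d
    exact hq1d (this ▸ hq1e)

end

/-- For an oriented Fano plane `(B, r)`, the in-neighborhood triples `T(v)` form
a Fano plane orthogonal (i.e. disjoint) to `B`. -/
theorem orientBlocks_fano_orthogonal {V : Type*} [DecidableEq V] [Fintype V]
    (B : Finset (Finset V)) (r : V → V → Prop) (hB : IsFano B) (hr : IsOrientation B r) :
    IsFano (orientBlocks r) ∧ DisjointSTS B (orientBlocks r) := by
  classical
  obtain ⟨h7, hS⟩ := hB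
  have hmemO : ∀ b : Finset V, b ∈ orientBlocks r ↔
      ∃ v : V, Finset.univ.filter (fun x => r x v) = b := by
    intro b
    simp [orientBlocks]
  constructor
  · refine ⟨h7, ?_, ?_⟩
    · -- every block of orientBlocks has 3 points
      intro b hb
      obtain ⟨v, hv⟩ := (hmemO b).mp hb
      obtain ⟨p1, p2, p3, q1, q2, q3, hP, hQ, -, -, -, hqq12, hqq13, hqq23, -⟩ :=
        neighbor_structure h7 hS hr v
      rw [← hv, hQ]
      exact Finset.card_eq_three.mpr ⟨q1, q2, q3, hqq12, hqq13, hqq23, rfl⟩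
    · -- every pair of points lies in a unique block
      intro x y hxy
      obtain ⟨px1, px2, px3, qx1, qx2, qx3, hPx, hQx, -, -, -, -, -, -, hPxB⟩ :=
        neighbor_structure h7 hS hr x
      obtain ⟨py1, py2, py3, qy1, qy2, qy3, hPy, hQy, -, -, -, -, -, -, hPyB⟩ :=
        neighbor_structure h7 hS hr y
      have hNx : Finset.univ.filter (fun u => r x u) ∈ B := by rw [hPx]; exact hPxB
      have hNy : Finset.univ.filter (fun u => r y u) ∈ B := by rw [hPy]; exact hPyB
      have hne : Finset.univ.filter (fun u => r x u) ≠ Finset.univ.filter (fun u => r y u) := by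
        intro h
        rcases r_total hS hr hxy with hxy' | hyx
        · have hy1 : y ∈ Finset.univ.filter (fun u => r x u) := by simp [hxy']
          rw [h] at hy1
          exact no_self hr y (Finset.mem_filter.mp hy1).2
        · have hx1 : x ∈ Finset.univ.filter (fun u => r y u) := by simp [hyx]
          rw [← h] at hx1
          exact no_self hr x (Finset.mem_filter.mp hx1).2
      obtain ⟨v, hvx, hvy⟩ := blocks_meet h7 hS hNx hNy hne
      have hrxv : r x v := (Finset.mem_filter.mp hvx).2
      have hryv : r y v := (Finset.mem_filter.mp hvy).2
      refine ⟨Finset.univ.filter (fun u => r u v), ⟨(hmemO _).mpr ⟨v, rfl⟩, by simp [hrxv],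
        by simp [hryv]⟩, ?_⟩
      rintro b' ⟨hb', hxb', hyb'⟩
      obtain ⟨v', hv'⟩ := (hmemO b').mp hb'
      rw [← hv'] at hxb' hyb'
      have hrxv' : r x v' := (Finset.mem_filter.mp hxb').2
      have hryv' : r y v' := (Finset.mem_filter.mp hyb').2
      have : v' = v := mem_of_mem_two_blocks hS hNx hNy hne
        (by simp [hrxv]) (by simp [hryv]) (by simp [hrxv']) (by simp [hryv'])
      rw [← hv', this]
  · -- disjointness
    intro b ⟨hbB, hbO⟩
    obtain ⟨v, hv⟩ := (hmemO b).mp hbO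
    exact filter_not_block h7 hS hr v (hv ▸ hbB)
end

section
/- Every Fano plane admits exactly eight distinct orientations. -/
namespace EO
set_option maxRecDepth 100000

def B0 : Finset (Finset (Fin 7)) :=
  {{0,1,2},{0,3,4},{1,3,5},{2,3,6},{0,5,6},{1,4,6},{2,4,5}}

def lines : Fin 7 → Fin 7 × Fin 7 × Fin 7 :=
  ![(0,1,2),(0,3,4),(1,3,5),(2,3,6),(0,5,6),(1,4,6),(2,4,5)]

def recon (d : Fin 7 → Bool) (x y : Fin 7) : Bool :=
  (List.finRange 7).any fun i =>
    let p := lines i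
    if d i then
      (decide (x = p.1) && decide (y = p.2.1)) || (decide (x = p.2.1) && decide (y = p.2.2)) ||
        (decide (x = p.2.2) && decide (y = p.1))
    else
      (decide (y = p.1) && decide (x = p.2.1)) || (decide (y = p.2.1) && decide (x = p.2.2)) ||
        (decide (y = p.2.2) && decide (x = p.1))

def Cyc {V : Type*} (r : V → V → Prop) (a b c : V) : Prop :=
  (r a b ∧ r b c ∧ r c a) ∨ (r a c ∧ r c b ∧ r b a)

instance {V : Type*} (r : V → V → Prop) [DecidableRel r] (a b c : V) : Decidable (Cyc r a b c) := by
  unfold Cyc; infer_instance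

lemma d1a : ∀ b ∈ B0, Finset.card b = 3 := by decide
lemma d1b : ∀ x y : Fin 7, x ≠ y → ∃ b ∈ B0, x ∈ b ∧ y ∈ b := by decide
lemma d1c : ∀ b ∈ B0, ∀ c ∈ B0, ∀ x y : Fin 7, x ≠ y → x ∈ b → y ∈ b → x ∈ c → y ∈ c → b = c := by
  decide
lemma lines_mem : ∀ i : Fin 7,
    ({(lines i).1, (lines i).2.1, (lines i).2.2} : Finset (Fin 7)) ∈ B0 := by decide
lemma d3 : ∀ (d : Fin 7 → Bool) (i : Fin 7),
    Cyc (fun x y => recon d x y = true) (lines i).1 (lines i).2.1 (lines i).2.2 := by decide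
lemma d4 : ∀ (d : Fin 7 → Bool) (x y : Fin 7), recon d x y = true → ¬(recon d y x = true) := by
  decide
lemma d6 : ∀ (d : Fin 7 → Bool) (i : Fin 7), recon d (lines i).1 (lines i).2.1 = d i := by decide
lemma d7 : ∀ x y : Fin 7, x ≠ y → ∃ i : Fin 7,
    x ∈ ({(lines i).1, (lines i).2.1, (lines i).2.2} : Finset (Fin 7)) ∧
    y ∈ ({(lines i).1, (lines i).2.1, (lines i).2.2} : Finset (Fin 7)) := by decide
lemma d8 : ∀ x y z : Fin 7, ({x,y,z} : Finset (Fin 7)) ∈ B0 → ∃ i : Fin 7,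
    lines i = (x,y,z) ∨ lines i = (y,z,x) ∨ lines i = (z,x,y) ∨
    lines i = (x,z,y) ∨ lines i = (z,y,x) ∨ lines i = (y,x,z) := by decide

def nbrs : Fin 7 → Fin 7 × Fin 7 × Fin 7 × Fin 7 × Fin 7 × Fin 7 :=
  ![(1,2,3,4,5,6), (0,2,3,5,4,6), (0,1,3,6,4,5), (0,4,1,5,2,6), (0,3,1,6,2,5),
    (0,6,1,3,2,4), (0,5,1,4,2,3)]

lemma d9 : ∀ x : Fin 7,
    ({x, (nbrs x).1, (nbrs x).2.1} : Finset (Fin 7)) ∈ B0 ∧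
    ({x, (nbrs x).2.2.1, (nbrs x).2.2.2.1} : Finset (Fin 7)) ∈ B0 ∧
    ({x, (nbrs x).2.2.2.2.1, (nbrs x).2.2.2.2.2} : Finset (Fin 7)) ∈ B0 ∧
    (∀ k : Fin 7, k = x ∨ k = (nbrs x).1 ∨ k = (nbrs x).2.1 ∨ k = (nbrs x).2.2.1 ∨
      k = (nbrs x).2.2.2.1 ∨ k = (nbrs x).2.2.2.2.1 ∨ k = (nbrs x).2.2.2.2.2) ∧
    ([x, (nbrs x).1, (nbrs x).2.1, (nbrs x).2.2.1, (nbrs x).2.2.2.1, (nbrs x).2.2.2.2.1,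
      (nbrs x).2.2.2.2.2] : List (Fin 7)).Nodup := by decide

lemma d10 : (Finset.univ.filter (fun d : Fin 7 → Bool =>
    ∀ x : Fin 7, Finset.univ.filter (fun y => recon d x y = true) ∈ B0)).card = 8 := by decide


set_option maxHeartbeats 2000000

variable {V : Type*} [DecidableEq V] [Fintype V]

lemma Cyc_perm {r : V → V → Prop} {a b c : V} (h : Cyc r a b c) :
    Cyc r b c a ∧ Cyc r c a b ∧ Cyc r a c b ∧ Cyc r c b a ∧ Cyc r b a c := by
  unfold Cyc at *; tauto

lemma uniq {B : Finset (Finset V)} (hS : IsSteiner B) {s t : Finset V} {u v : V}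
    (hs : s ∈ B) (ht : t ∈ B) (huv : u ≠ v) (hus : u ∈ s) (hvs : v ∈ s)
    (hut : u ∈ t) (hvt : v ∈ t) : s = t := by
  obtain ⟨b, -, hb⟩ := hS.2 u v huv
  rw [hb s ⟨hs, hus, hvs⟩, hb t ⟨ht, hut, hvt⟩]

lemma blockne {x a b c d : V} (h1 : a ≠ x) (h2 : a ≠ c) (h3 : a ≠ d) :
    ({x, a, b} : Finset V) ≠ ({x, c, d} : Finset V) := by
  intro h
  have : a ∈ ({x, c, d} : Finset V) := h ▸ (by simp)
  simp only [Finset.mem_insert, Finset.mem_singleton] at this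
  tauto

lemma lineIffs {r : V → V → Prop} (hanti : ∀ a b, r a b → ¬ r b a) {a b c : V}
    (hcyc : Cyc r a b c) :
    (r b c ↔ r a b) ∧ (r c a ↔ r a b) ∧ (r b a ↔ ¬ r a b) ∧ (r c b ↔ ¬ r a b) ∧
      (r a c ↔ ¬ r a b) := by
  have Hab := hanti a b; have Hbc := hanti b c; have Hca := hanti c a
  unfold Cyc at hcyc
  refine ⟨⟨fun h => ?_, fun h => ?_⟩, ⟨fun h => ?_, fun h => ?_⟩, ⟨fun h => ?_, fun h => ?_⟩,
    ⟨fun h => ?_, fun h => ?_⟩, ⟨fun h => ?_, fun h => ?_⟩⟩ <;> tauto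

lemma agree {r r' : V → V → Prop} (hanti : ∀ a b, r a b → ¬ r b a)
    (hanti' : ∀ a b, r' a b → ¬ r' b a) {a b c : V}
    (hcyc : Cyc r a b c) (hcyc' : Cyc r' a b c) (hdir : r a b ↔ r' a b) :
    ∀ x y : V, x ∈ ({a, b, c} : Finset V) → y ∈ ({a, b, c} : Finset V) → (r x y ↔ r' x y) := by
  obtain ⟨L1, L2, L3, L4, L5⟩ := lineIffs hanti hcyc
  obtain ⟨K1, K2, K3, K4, K5⟩ := lineIffs hanti' hcyc'
  intro x y hx hy
  simp only [Finset.mem_insert, Finset.mem_singleton] at hx hy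
  rcases hx with rfl | rfl | rfl <;> rcases hy with rfl | rfl | rfl
  · exact iff_of_false (fun h => hanti _ _ h h) (fun h => hanti' _ _ h h)
  · exact hdir
  · exact L5.trans ((not_congr hdir).trans K5.symm)
  · exact L3.trans ((not_congr hdir).trans K3.symm)
  · exact iff_of_false (fun h => hanti _ _ h h) (fun h => hanti' _ _ h h)
  · exact L1.trans (hdir.trans K1.symm)
  · exact L2.trans (hdir.trans K2.symm)
  · exact L4.trans ((not_congr hdir).trans K4.symm)
  · exact iff_of_false (fun h => hanti _ _ h h) (fun h => hanti' _ _ h h)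

lemma cond3_of_outs {B : Finset (Finset V)} (hS : IsSteiner B) (r : V → V → Prop)
    (hanti : ∀ x y, r x y → ¬ r y x)
    (houts : ∀ x, ∃ s ∈ B, ∀ y, r x y ↔ y ∈ s) :
    ∀ x y1 z1 y2 z2 y3 z3 : V,
      ({x, y1, z1} : Finset V) ∈ B → ({x, y2, z2} : Finset V) ∈ B →
      ({x, y3, z3} : Finset V) ∈ B →
      ({x, y1, z1} : Finset V) ≠ ({x, y2, z2} : Finset V) →
      ({x, y1, z1} : Finset V) ≠ ({x, y3, z3} : Finset V) →
      ({x, y2, z2} : Finset V) ≠ ({x, y3, z3} : Finset V) →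
      r x y1 → r x y2 → r x y3 → ({y1, y2, y3} : Finset V) ∈ B := by
  intro x y1 z1 y2 z2 y3 z3 hb1 hb2 hb3 h12 h13 h23 hr1 hr2 hr3
  obtain ⟨s, hsB, hs⟩ := houts x
  have hxy : ∀ y, r x y → x ≠ y := fun y h hx => hanti x y h (hx ▸ h)
  have key : ∀ {a za b zb : V}, r x a → r x b → ({x, a, za} : Finset V) ∈ B →
      ({x, b, zb} : Finset V) ∈ B → ({x, a, za} : Finset V) ≠ ({x, b, zb} : Finset V) →
      a ≠ b := by
    intro a za b zb hra hrb hba hbb hne heq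
    exact hne (uniq hS hba hbb (hxy a hra) (by simp) (by simp) (by simp) (by simp [heq]))
  have n12 : y1 ≠ y2 := key hr1 hr2 hb1 hb2 h12
  have n13 : y1 ≠ y3 := key hr1 hr3 hb1 hb3 h13
  have n23 : y2 ≠ y3 := key hr2 hr3 hb2 hb3 h23
  have hsub : ({y1, y2, y3} : Finset V) ⊆ s := by
    intro k hk
    simp only [Finset.mem_insert, Finset.mem_singleton] at hk
    rcases hk with rfl | rfl | rfl
    · exact (hs k).mp hr1
    · exact (hs k).mp hr2
    · exact (hs k).mp hr3
  have hcard : ({y1, y2, y3} : Finset V).card = 3 :=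
    Finset.card_eq_three.mpr ⟨y1, y2, y3, n12, n13, n23, rfl⟩
  have : ({y1, y2, y3} : Finset V) = s :=
    Finset.eq_of_subset_of_card_le hsub (by rw [hS.1 s hsB, hcard])
  rwa [this]

lemma F0 {B : Finset (Finset V)} (b : V → V → Bool)
    (hcond3 : ∀ x y1 z1 y2 z2 y3 z3 : V,
      ({x, y1, z1} : Finset V) ∈ B → ({x, y2, z2} : Finset V) ∈ B →
      ({x, y3, z3} : Finset V) ∈ B →
      ({x, y1, z1} : Finset V) ≠ ({x, y2, z2} : Finset V) →
      ({x, y1, z1} : Finset V) ≠ ({x, y3, z3} : Finset V) →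
      ({x, y2, z2} : Finset V) ≠ ({x, y3, z3} : Finset V) →
      b x y1 = true → b x y2 = true → b x y3 = true → ({y1, y2, y3} : Finset V) ∈ B)
    (hanti : ∀ x y : V, b x y = true → ¬ b y x = true)
    {x y1 z1 y2 z2 y3 z3 : V}
    (hb1 : ({x, y1, z1} : Finset V) ∈ B) (hb2 : ({x, y2, z2} : Finset V) ∈ B)
    (hb3 : ({x, y3, z3} : Finset V) ∈ B)
    (hall : ∀ k : V, k = x ∨ k = y1 ∨ k = z1 ∨ k = y2 ∨ k = z2 ∨ k = y3 ∨ k = z3)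
    (hnd : ([x, y1, z1, y2, z2, y3, z3] : List V).Nodup)
    (h1 : b x y1 = true) (h1' : ¬ b x z1 = true)
    (h2 : b x y2 = true) (h2' : ¬ b x z2 = true)
    (h3 : b x y3 = true) (h3' : ¬ b x z3 = true) :
    Finset.univ.filter (fun y => b x y = true) ∈ B := by
  simp only [List.nodup_cons, List.mem_cons, List.not_mem_nil, or_false, not_or,
    List.nodup_nil, and_true] at hnd
  obtain ⟨⟨hxy1, hxz1, hxy2, hxz2, hxy3, hxz3⟩, ⟨hy1z1, hy1y2, hy1z2, hy1y3, hy1z3⟩,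
    ⟨hz1y2, hz1z2, hz1y3, hz1z3⟩, ⟨hy2z2, hy2y3, hy2z3⟩, ⟨hz2y3, hz2z3⟩, hy3z3, -⟩ := hnd
  have hxx : ¬ b x x = true := fun h => hanti x x h h
  have s1 : z1 ≠ y1 := fun h => hy1z1 h.symm
  have s2 : z1 ≠ y2 := hz1y2
  have s3 : z1 ≠ y3 := hz1y3
  have s4 : z2 ≠ y1 := fun h => hy1z2 h.symm
  have s5 : z2 ≠ y2 := fun h => hy2z2 h.symm
  have s6 : z2 ≠ y3 := hz2y3
  have s7 : z3 ≠ y1 := fun h => hy1z3 h.symm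
  have s8 : z3 ≠ y2 := fun h => hy2z3 h.symm
  have s9 : z3 ≠ y3 := fun h => hy3z3 h.symm
  have hY : ({y1, y2, y3} : Finset V) ∈ B :=
    hcond3 x y1 z1 y2 z2 y3 z3 hb1 hb2 hb3
      (blockne (fun h => hxy1 h.symm) hy1y2 hy1z2)
      (blockne (fun h => hxy1 h.symm) hy1y3 hy1z3)
      (blockne (fun h => hxy2 h.symm) hy2y3 hy2z3) h1 h2 h3
  have : Finset.univ.filter (fun y => b x y = true) = ({y1, y2, y3} : Finset V) := by
    ext k
    rcases hall k with rfl | rfl | rfl | rfl | rfl | rfl | rfl <;>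
      simp only [Finset.mem_filter, Finset.mem_univ, true_and, Finset.mem_insert,
        Finset.mem_singleton]
    · exact iff_of_false hxx (by simp [hxy1, hxy2, hxy3])
    · exact iff_of_true h1 (by simp)
    · exact iff_of_false h1' (by simp [s1, s2, s3])
    · exact iff_of_true h2 (by simp)
    · exact iff_of_false h2' (by simp [s4, s5, s6])
    · exact iff_of_true h3 (by simp)
    · exact iff_of_false h3' (by simp [s7, s8, s9])
  rwa [this]

lemma F1 {B : Finset (Finset V)} (b : V → V → Bool)
    (hO : IsOrientation B (fun x y => b x y = true))
    {x p q s t u v : V}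
    (h1 : ({x, p, q} : Finset V) ∈ B) (h2 : ({x, s, t} : Finset V) ∈ B)
    (h3 : ({x, u, v} : Finset V) ∈ B)
    (hall : ∀ k : V, k = x ∨ k = p ∨ k = q ∨ k = s ∨ k = t ∨ k = u ∨ k = v)
    (hnd : ([x, p, q, s, t, u, v] : List V).Nodup) :
    Finset.univ.filter (fun y => b x y = true) ∈ B := by
  obtain ⟨hanti, hcyc, hcond3⟩ := hO
  have c1 := hcyc x p q h1
  have c2 := hcyc x s t h2
  have c3 := hcyc x u v h3
  have e1 : ({x, q, p} : Finset V) = ({x, p, q} : Finset V) := by rw [Finset.pair_comm q p]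
  have e2 : ({x, t, s} : Finset V) = ({x, s, t} : Finset V) := by rw [Finset.pair_comm t s]
  have e3 : ({x, v, u} : Finset V) = ({x, u, v} : Finset V) := by rw [Finset.pair_comm v u]
  have hb1' : ({x, q, p} : Finset V) ∈ B := e1 ▸ h1
  have hb2' : ({x, t, s} : Finset V) ∈ B := e2 ▸ h2
  have hb3' : ({x, v, u} : Finset V) ∈ B := e3 ▸ h3
  -- permuted covers
  have hallA : ∀ k : V, k = x ∨ k = q ∨ k = p ∨ k = s ∨ k = t ∨ k = u ∨ k = v := by
    intro k; rcases hall k with h | h | h | h | h | h | h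
    exacts [Or.inl h, Or.inr (Or.inr (Or.inl h)), Or.inr (Or.inl h), Or.inr (Or.inr (Or.inr (Or.inl h))), Or.inr (Or.inr (Or.inr (Or.inr (Or.inl h)))), Or.inr (Or.inr (Or.inr (Or.inr (Or.inr (Or.inl h))))), Or.inr (Or.inr (Or.inr (Or.inr (Or.inr (Or.inr (h))))))]
  have hallB : ∀ k : V, k = x ∨ k = p ∨ k = q ∨ k = t ∨ k = s ∨ k = u ∨ k = v := by
    intro k; rcases hall k with h | h | h | h | h | h | h
    exacts [Or.inl h, Or.inr (Or.inl h), Or.inr (Or.inr (Or.inl h)), Or.inr (Or.inr (Or.inr (Or.inr (Or.inl h)))), Or.inr (Or.inr (Or.inr (Or.inl h))), Or.inr (Or.inr (Or.inr (Or.inr (Or.inr (Or.inl h))))), Or.inr (Or.inr (Or.inr (Or.inr (Or.inr (Or.inr (h))))))]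
  have hallC : ∀ k : V, k = x ∨ k = p ∨ k = q ∨ k = s ∨ k = t ∨ k = v ∨ k = u := by
    intro k; rcases hall k with h | h | h | h | h | h | h
    exacts [Or.inl h, Or.inr (Or.inl h), Or.inr (Or.inr (Or.inl h)), Or.inr (Or.inr (Or.inr (Or.inl h))), Or.inr (Or.inr (Or.inr (Or.inr (Or.inl h)))), Or.inr (Or.inr (Or.inr (Or.inr (Or.inr (Or.inr (h)))))), Or.inr (Or.inr (Or.inr (Or.inr (Or.inr (Or.inl h)))))]
  have hallAB : ∀ k : V, k = x ∨ k = q ∨ k = p ∨ k = t ∨ k = s ∨ k = u ∨ k = v := by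
    intro k; rcases hall k with h | h | h | h | h | h | h
    exacts [Or.inl h, Or.inr (Or.inr (Or.inl h)), Or.inr (Or.inl h), Or.inr (Or.inr (Or.inr (Or.inr (Or.inl h)))), Or.inr (Or.inr (Or.inr (Or.inl h))), Or.inr (Or.inr (Or.inr (Or.inr (Or.inr (Or.inl h))))), Or.inr (Or.inr (Or.inr (Or.inr (Or.inr (Or.inr (h))))))]
  have hallAC : ∀ k : V, k = x ∨ k = q ∨ k = p ∨ k = s ∨ k = t ∨ k = v ∨ k = u := by
    intro k; rcases hall k with h | h | h | h | h | h | h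
    exacts [Or.inl h, Or.inr (Or.inr (Or.inl h)), Or.inr (Or.inl h), Or.inr (Or.inr (Or.inr (Or.inl h))), Or.inr (Or.inr (Or.inr (Or.inr (Or.inl h)))), Or.inr (Or.inr (Or.inr (Or.inr (Or.inr (Or.inr (h)))))), Or.inr (Or.inr (Or.inr (Or.inr (Or.inr (Or.inl h)))))]
  have hallBC : ∀ k : V, k = x ∨ k = p ∨ k = q ∨ k = t ∨ k = s ∨ k = v ∨ k = u := by
    intro k; rcases hall k with h | h | h | h | h | h | h
    exacts [Or.inl h, Or.inr (Or.inl h), Or.inr (Or.inr (Or.inl h)), Or.inr (Or.inr (Or.inr (Or.inr (Or.inl h)))), Or.inr (Or.inr (Or.inr (Or.inl h))), Or.inr (Or.inr (Or.inr (Or.inr (Or.inr (Or.inr (h)))))), Or.inr (Or.inr (Or.inr (Or.inr (Or.inr (Or.inl h)))))]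
  have hallABC : ∀ k : V, k = x ∨ k = q ∨ k = p ∨ k = t ∨ k = s ∨ k = v ∨ k = u := by
    intro k; rcases hall k with h | h | h | h | h | h | h
    exacts [Or.inl h, Or.inr (Or.inr (Or.inl h)), Or.inr (Or.inl h), Or.inr (Or.inr (Or.inr (Or.inr (Or.inl h)))), Or.inr (Or.inr (Or.inr (Or.inl h))), Or.inr (Or.inr (Or.inr (Or.inr (Or.inr (Or.inr (h)))))), Or.inr (Or.inr (Or.inr (Or.inr (Or.inr (Or.inl h)))))]
  -- permuted nodups
  have hndmem : ∀ (l l' : List V), l.Perm l' → l.Nodup → l'.Nodup := fun l l' hp hn => hp.nodup hn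
  have pA : ([x, p, q, s, t, u, v] : List V).Perm [x, q, p, s, t, u, v] :=
    List.Perm.cons x (List.Perm.swap q p _)
  have pB : ([x, p, q, s, t, u, v] : List V).Perm [x, p, q, t, s, u, v] :=
    List.Perm.cons x (List.Perm.cons p (List.Perm.cons q (List.Perm.swap t s _)))
  have pC : ([x, p, q, s, t, u, v] : List V).Perm [x, p, q, s, t, v, u] :=
    List.Perm.cons x (List.Perm.cons p (List.Perm.cons q (List.Perm.cons s
      (List.Perm.cons t (List.Perm.swap v u _)))))
  have ndA := hndmem _ _ pA hnd
  have ndB := hndmem _ _ pB hnd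
  have ndC := hndmem _ _ pC hnd
  have ndAB := hndmem _ _ (pA.trans (List.Perm.cons x (List.Perm.cons q (List.Perm.cons p
    (List.Perm.swap t s _))))) hnd
  have ndAC := hndmem _ _ (pA.trans (List.Perm.cons x (List.Perm.cons q (List.Perm.cons p
    (List.Perm.cons s (List.Perm.cons t (List.Perm.swap v u _))))))) hnd
  have ndBC := hndmem _ _ (pB.trans (List.Perm.cons x (List.Perm.cons p (List.Perm.cons q
    (List.Perm.cons t (List.Perm.cons s (List.Perm.swap v u _))))))) hnd
  have ndABC := hndmem _ _ (pA.trans ((List.Perm.cons x (List.Perm.cons q (List.Perm.cons p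
    (List.Perm.swap t s _)))).trans (List.Perm.cons x (List.Perm.cons q (List.Perm.cons p
    (List.Perm.cons t (List.Perm.cons s (List.Perm.swap v u _)))))))) hnd
  rcases c1 with ⟨a1, -, a3⟩ | ⟨a1, -, a3⟩ <;> rcases c2 with ⟨b1, -, b3⟩ | ⟨b1, -, b3⟩ <;>
    rcases c3 with ⟨g1, -, g3⟩ | ⟨g1, -, g3⟩
  · exact F0 b hcond3 hanti h1 h2 h3 hall hnd a1 (hanti _ _ a3) b1 (hanti _ _ b3) g1 (hanti _ _ g3)
  · exact F0 b hcond3 hanti h1 h2 hb3' hallC ndC a1 (hanti _ _ a3) b1 (hanti _ _ b3) g1 (hanti _ _ g3)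
  · exact F0 b hcond3 hanti h1 hb2' h3 hallB ndB a1 (hanti _ _ a3) b1 (hanti _ _ b3) g1 (hanti _ _ g3)
  · exact F0 b hcond3 hanti h1 hb2' hb3' hallBC ndBC a1 (hanti _ _ a3) b1 (hanti _ _ b3) g1 (hanti _ _ g3)
  · exact F0 b hcond3 hanti hb1' h2 h3 hallA ndA a1 (hanti _ _ a3) b1 (hanti _ _ b3) g1 (hanti _ _ g3)
  · exact F0 b hcond3 hanti hb1' h2 hb3' hallAC ndAC a1 (hanti _ _ a3) b1 (hanti _ _ b3) g1 (hanti _ _ g3)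
  · exact F0 b hcond3 hanti hb1' hb2' h3 hallAB ndAB a1 (hanti _ _ a3) b1 (hanti _ _ b3) g1 (hanti _ _ g3)
  · exact F0 b hcond3 hanti hb1' hb2' hb3' hallABC ndABC a1 (hanti _ _ a3) b1 (hanti _ _ b3) g1 (hanti _ _ g3)

end EO

namespace EO

theorem count0 : {r : Fin 7 → Fin 7 → Prop | IsOrientation B0 r}.ncard = 8 := by
  classical
  have hSt : IsSteiner B0 := by
    refine ⟨d1a, fun x y hxy => ?_⟩
    obtain ⟨b, hb, hx, hy⟩ := d1b x y hxy
    exact ⟨b, ⟨hb, hx, hy⟩, fun c ⟨hc, hxc, hyc⟩ => d1c c hc b hb x y hxy hxc hyc hx hy⟩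
  have himg : {r : Fin 7 → Fin 7 → Prop | IsOrientation B0 r}
      = (fun d : Fin 7 → Bool => fun x y : Fin 7 => recon d x y = true) ''
        {d : Fin 7 → Bool | ∀ x : Fin 7,
          Finset.univ.filter (fun y => recon d x y = true) ∈ B0} := by
    ext r
    simp only [Set.mem_setOf_eq, Set.mem_image]
    constructor
    · intro hO
      set d : Fin 7 → Bool := fun i => decide (r (lines i).1 (lines i).2.1) with hd
      have hIff : ∀ x y, r x y ↔ recon d x y = true := by
        intro x y
        by_cases hxy : x = y
        · subst hxy
          exact iff_of_false (fun h => hO.1 x x h h) (fun h => d4 d x x h h)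
        · obtain ⟨i, hxi, hyi⟩ := d7 x y hxy
          refine agree hO.1 (d4 d) (hO.2.1 _ _ _ (lines_mem i)) (d3 d i) ?_ x y hxi hyi
          rw [d6 d i, hd]
          exact (decide_eq_true_iff).symm
      have hr : r = fun x y => recon d x y = true :=
        funext fun x => funext fun y => propext (hIff x y)
      refine ⟨d, ?_, hr.symm⟩
      intro x
      have hO' : IsOrientation B0 (fun x y => recon d x y = true) := hr ▸ hO
      obtain ⟨m1, m2, m3, hall, hnd⟩ := d9 x
      exact F1 (recon d) hO' m1 m2 m3 hall hnd
    · rintro ⟨d, hOk, rfl⟩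
      refine ⟨d4 d, ?_, ?_⟩
      · intro x1 x2 x3 hmem
        obtain ⟨i, hp⟩ := d8 x1 x2 x3 hmem
        have hc := d3 d i
        rcases hp with h | h | h | h | h | h <;> rw [h] at hc
        · exact hc
        · exact (Cyc_perm hc).2.1
        · exact (Cyc_perm hc).1
        · exact (Cyc_perm hc).2.2.1
        · exact (Cyc_perm hc).2.2.2.1
        · exact (Cyc_perm hc).2.2.2.2
      · exact cond3_of_outs hSt _ (d4 d)
          (fun x => ⟨_, hOk x, fun y => by simp⟩)
  rw [himg]
  rw [Set.ncard_image_of_injOn ?_]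
  · have : {d : Fin 7 → Bool | ∀ x : Fin 7,
        Finset.univ.filter (fun y => recon d x y = true) ∈ B0}
        = ↑(Finset.univ.filter (fun d : Fin 7 → Bool =>
            ∀ x : Fin 7, Finset.univ.filter (fun y => recon d x y = true) ∈ B0)) := by
      ext d; simp
    rw [this, Set.ncard_coe_finset, d10]
  · intro dA _ dB _ heq
    funext i
    have h := congrFun (congrFun heq (lines i).1) (lines i).2.1
    have h' : (dA i = true) = (dB i = true) := by
      rw [← d6 dA i, ← d6 dB i]; exact h
    cases hA : dA i <;> cases hB : dB i <;> simp_all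


variable {V : Type*} [DecidableEq V] [Fintype V]

lemma third {s : Finset V} (hs : s.card = 3) {u v : V} (hu : u ∈ s) (hv : v ∈ s)
    (huv : u ≠ v) : ∃ w, w ≠ u ∧ w ≠ v ∧ s = {u, v, w} := by
  obtain ⟨a, b, c, hab, hac, hbc, rfl⟩ := Finset.card_eq_three.mp hs
  simp only [Finset.mem_insert, Finset.mem_singleton] at hu hv
  rcases hu with rfl | rfl | rfl <;> rcases hv with rfl | rfl | rfl
  · exact absurd rfl huv
  · exact ⟨c, Ne.symm hac, Ne.symm hbc, rfl⟩
  · exact ⟨b, Ne.symm hab, hbc, by ext k; simp; tauto⟩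
  · exact ⟨c, Ne.symm hbc, Ne.symm hac, by ext k; simp; tauto⟩
  · exact absurd rfl huv
  · exact ⟨a, hab, hac, by ext k; simp; tauto⟩
  · exact ⟨b, hbc, Ne.symm hab, by ext k; simp; tauto⟩
  · exact ⟨a, hac, hab, by ext k; simp; tauto⟩
  · exact absurd rfl huv

def mk7 {α : Type*} (a1 a2 a3 a4 a5 a6 a7 : α) : Fin 7 → α := fun i =>
  match i with
  | ⟨0, _⟩ => a1
  | ⟨1, _⟩ => a2
  | ⟨2, _⟩ => a3
  | ⟨3, _⟩ => a4
  | ⟨4, _⟩ => a5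
  | ⟨5, _⟩ => a6
  | ⟨6, _⟩ => a7

@[simp] lemma mk7_0 {α : Type*} (a1 a2 a3 a4 a5 a6 a7 : α) : mk7 a1 a2 a3 a4 a5 a6 a7 0 = a1 := rfl
@[simp] lemma mk7_1 {α : Type*} (a1 a2 a3 a4 a5 a6 a7 : α) : mk7 a1 a2 a3 a4 a5 a6 a7 1 = a2 := rfl
@[simp] lemma mk7_2 {α : Type*} (a1 a2 a3 a4 a5 a6 a7 : α) : mk7 a1 a2 a3 a4 a5 a6 a7 2 = a3 := rfl
@[simp] lemma mk7_3 {α : Type*} (a1 a2 a3 a4 a5 a6 a7 : α) : mk7 a1 a2 a3 a4 a5 a6 a7 3 = a4 := rfl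
@[simp] lemma mk7_4 {α : Type*} (a1 a2 a3 a4 a5 a6 a7 : α) : mk7 a1 a2 a3 a4 a5 a6 a7 4 = a5 := rfl
@[simp] lemma mk7_5 {α : Type*} (a1 a2 a3 a4 a5 a6 a7 : α) : mk7 a1 a2 a3 a4 a5 a6 a7 5 = a6 := rfl
@[simp] lemma mk7_6 {α : Type*} (a1 a2 a3 a4 a5 a6 a7 : α) : mk7 a1 a2 a3 a4 a5 a6 a7 6 = a7 := rfl

lemma classification {B : Finset (Finset V)} (hB : IsFano B) :
    ∃ f : Fin 7 → V, Function.Bijective f ∧ B = B0.image (Finset.image f) := by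
  obtain ⟨hcard, hS⟩ := hB
  obtain ⟨u, v, huv⟩ := Fintype.exists_pair_of_one_lt_card (by rw [hcard]; norm_num)
  obtain ⟨b1, ⟨hb1B, hub, hvb⟩, -⟩ := hS.2 u v huv
  obtain ⟨x1, x2, x3, n12, n13, n23, hb1⟩ := Finset.card_eq_three.mp (hS.1 b1 hb1B)
  subst hb1
  have hex4 : ∃ x : V, x ∉ ({x1, x2, x3} : Finset V) := by
    by_contra h
    push_neg at h
    have hsub : (Finset.univ : Finset V) ⊆ {x1, x2, x3} := fun x _ => h x
    have hc := Finset.card_le_card hsub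
    rw [Finset.card_univ, hcard,
      Finset.card_eq_three.mpr ⟨x1, x2, x3, n12, n13, n23, rfl⟩] at hc
    omega
  obtain ⟨x4, hx4⟩ := hex4
  simp only [Finset.mem_insert, Finset.mem_singleton, not_or] at hx4
  obtain ⟨h41, h42, h43⟩ := hx4
  have n14 : x1 ≠ x4 := fun h => h41 h.symm
  have n24 : x2 ≠ x4 := fun h => h42 h.symm
  have n34 : x3 ≠ x4 := fun h => h43 h.symm
  obtain ⟨s14, ⟨hs14B, h1s14, h4s14⟩, -⟩ := hS.2 x1 x4 n14
  obtain ⟨x5, h51', h54', hs14⟩ := third (hS.1 _ hs14B) h1s14 h4s14 n14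
  rw [hs14] at hs14B
  obtain ⟨s24, ⟨hs24B, h2s24, h4s24⟩, -⟩ := hS.2 x2 x4 n24
  obtain ⟨x6, h62', h64', hs24⟩ := third (hS.1 _ hs24B) h2s24 h4s24 n24
  rw [hs24] at hs24B
  obtain ⟨s34, ⟨hs34B, h3s34, h4s34⟩, -⟩ := hS.2 x3 x4 n34
  obtain ⟨x7, h73', h74', hs34⟩ := third (hS.1 _ hs34B) h3s34 h4s34 n34
  rw [hs34] at hs34B
  -- distinctness
  have n52 : x5 ≠ x2 := by
    intro h
    have heq : ({x1, x4, x5} : Finset V) = {x1, x2, x3} :=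
      uniq hS hs14B hb1B (Ne.symm h51') (by simp) (by simp) (by simp) (by simp [h])
    have h4m : x4 ∈ ({x1, x2, x3} : Finset V) := heq ▸ (by simp)
    simp only [Finset.mem_insert, Finset.mem_singleton] at h4m
    tauto
  have n53 : x5 ≠ x3 := by
    intro h
    have heq : ({x1, x4, x5} : Finset V) = {x1, x2, x3} :=
      uniq hS hs14B hb1B (Ne.symm h51') (by simp) (by simp) (by simp) (by simp [h])
    have h4m : x4 ∈ ({x1, x2, x3} : Finset V) := heq ▸ (by simp)
    simp only [Finset.mem_insert, Finset.mem_singleton] at h4m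
    tauto
  have n61 : x6 ≠ x1 := by
    intro h
    have heq : ({x2, x4, x6} : Finset V) = {x1, x2, x3} :=
      uniq hS hs24B hb1B (Ne.symm h62') (by simp) (by simp) (by simp) (by simp [h])
    have h4m : x4 ∈ ({x1, x2, x3} : Finset V) := heq ▸ (by simp)
    simp only [Finset.mem_insert, Finset.mem_singleton] at h4m
    tauto
  have n63 : x6 ≠ x3 := by
    intro h
    have heq : ({x2, x4, x6} : Finset V) = {x1, x2, x3} :=
      uniq hS hs24B hb1B (Ne.symm h62') (by simp) (by simp) (by simp) (by simp [h])
    have h4m : x4 ∈ ({x1, x2, x3} : Finset V) := heq ▸ (by simp)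
    simp only [Finset.mem_insert, Finset.mem_singleton] at h4m
    tauto
  have n65 : x6 ≠ x5 := by
    intro h
    have heq : ({x2, x4, x6} : Finset V) = {x1, x4, x5} :=
      uniq hS hs24B hs14B (Ne.symm h64') (by simp) (by simp) (by simp) (by simp [h])
    have h2m : x2 ∈ ({x1, x4, x5} : Finset V) := heq ▸ (by simp)
    simp only [Finset.mem_insert, Finset.mem_singleton] at h2m
    rcases h2m with h' | h' | h'
    · exact n12 h'.symm
    · exact n24 h'
    · exact n52 h'.symm
  have n71 : x7 ≠ x1 := by
    intro h
    have heq : ({x3, x4, x7} : Finset V) = {x1, x2, x3} :=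
      uniq hS hs34B hb1B (Ne.symm h73') (by simp) (by simp) (by simp) (by simp [h])
    have h4m : x4 ∈ ({x1, x2, x3} : Finset V) := heq ▸ (by simp)
    simp only [Finset.mem_insert, Finset.mem_singleton] at h4m
    tauto
  have n72 : x7 ≠ x2 := by
    intro h
    have heq : ({x3, x4, x7} : Finset V) = {x1, x2, x3} :=
      uniq hS hs34B hb1B (Ne.symm h73') (by simp) (by simp) (by simp) (by simp [h])
    have h4m : x4 ∈ ({x1, x2, x3} : Finset V) := heq ▸ (by simp)
    simp only [Finset.mem_insert, Finset.mem_singleton] at h4m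
    tauto
  have n75 : x7 ≠ x5 := by
    intro h
    have heq : ({x3, x4, x7} : Finset V) = {x1, x4, x5} :=
      uniq hS hs34B hs14B (Ne.symm h74') (by simp) (by simp) (by simp) (by simp [h])
    have h3m : x3 ∈ ({x1, x4, x5} : Finset V) := heq ▸ (by simp)
    simp only [Finset.mem_insert, Finset.mem_singleton] at h3m
    rcases h3m with h' | h' | h'
    · exact n13 h'.symm
    · exact n34 h'
    · exact n53 h'.symm
  have n76 : x7 ≠ x6 := by
    intro h
    have heq : ({x3, x4, x7} : Finset V) = {x2, x4, x6} :=
      uniq hS hs34B hs24B (Ne.symm h74') (by simp) (by simp) (by simp) (by simp [h])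
    have h3m : x3 ∈ ({x2, x4, x6} : Finset V) := heq ▸ (by simp)
    simp only [Finset.mem_insert, Finset.mem_singleton] at h3m
    rcases h3m with h' | h' | h'
    · exact n23 h'.symm
    · exact n34 h'
    · exact n63 h'.symm
  -- canonical ≠ facts
  have n15 : x1 ≠ x5 := Ne.symm h51'
  have n45 : x4 ≠ x5 := Ne.symm h54'
  have n25 : x2 ≠ x5 := Ne.symm n52
  have n35 : x3 ≠ x5 := Ne.symm n53
  have n16 : x1 ≠ x6 := Ne.symm n61
  have n26 : x2 ≠ x6 := Ne.symm h62'
  have n36 : x3 ≠ x6 := Ne.symm n63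
  have n46 : x4 ≠ x6 := Ne.symm h64'
  have n56 : x5 ≠ x6 := Ne.symm n65
  have n17 : x1 ≠ x7 := Ne.symm n71
  have n27 : x2 ≠ x7 := Ne.symm n72
  have n37 : x3 ≠ x7 := Ne.symm h73'
  have n47 : x4 ≠ x7 := Ne.symm h74'
  have n57 : x5 ≠ x7 := Ne.symm n75
  have n67 : x6 ≠ x7 := Ne.symm n76
  -- the seven points cover V
  have hcS7 : ({x1, x2, x3, x4, x5, x6, x7} : Finset V).card = 7 := by
    rw [Finset.card_insert_of_notMem (by simp [n12, n13, n14, n15, n16, n17]),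
      Finset.card_insert_of_notMem (by simp [n23, n24, n25, n26, n27]),
      Finset.card_insert_of_notMem (by simp [n34, n35, n36, n37]),
      Finset.card_insert_of_notMem (by simp [n45, n46, n47]),
      Finset.card_insert_of_notMem (by simp [n56, n57]),
      Finset.card_insert_of_notMem (by simp [n67]), Finset.card_singleton]
  have hS7univ : ({x1, x2, x3, x4, x5, x6, x7} : Finset V) = Finset.univ :=
    Finset.eq_univ_of_card _ (by rw [hcS7, hcard])
  have hall7 : ∀ w : V, w = x1 ∨ w = x2 ∨ w = x3 ∨ w = x4 ∨ w = x5 ∨ w = x6 ∨ w = x7 := by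
    intro w
    have hw : w ∈ ({x1, x2, x3, x4, x5, x6, x7} : Finset V) := hS7univ ▸ Finset.mem_univ w
    simpa using hw
  -- forced blocks
  have hs16B : ({x1, x6, x7} : Finset V) ∈ B := by
    obtain ⟨s, ⟨hsB, h1s, h6s⟩, -⟩ := hS.2 x1 x6 n16
    obtain ⟨w, hw1, hw6, hseq⟩ := third (hS.1 _ hsB) h1s h6s n16
    have hws : w ∈ s := by rw [hseq]; simp
    rcases hall7 w with h | h | h | h | h | h | h
    · exact absurd h hw1
    · exfalso
      have heq := uniq hS hsB hb1B n12 h1s (h ▸ hws) (by simp) (by simp)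
      have : x6 ∈ ({x1, x2, x3} : Finset V) := heq ▸ h6s
      simp only [Finset.mem_insert, Finset.mem_singleton] at this
      rcases this with h' | h' | h'
      exacts [n16 h'.symm, n26 h'.symm, n36 h'.symm]
    · exfalso
      have heq := uniq hS hsB hb1B n13 h1s (h ▸ hws) (by simp) (by simp)
      have : x6 ∈ ({x1, x2, x3} : Finset V) := heq ▸ h6s
      simp only [Finset.mem_insert, Finset.mem_singleton] at this
      rcases this with h' | h' | h'
      exacts [n16 h'.symm, n26 h'.symm, n36 h'.symm]
    · exfalso
      have heq := uniq hS hsB hs14B n14 h1s (h ▸ hws) (by simp) (by simp)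
      have : x6 ∈ ({x1, x4, x5} : Finset V) := heq ▸ h6s
      simp only [Finset.mem_insert, Finset.mem_singleton] at this
      rcases this with h' | h' | h'
      exacts [n16 h'.symm, n46 h'.symm, n56 h'.symm]
    · exfalso
      have heq := uniq hS hsB hs14B n15 h1s (h ▸ hws) (by simp) (by simp)
      have : x6 ∈ ({x1, x4, x5} : Finset V) := heq ▸ h6s
      simp only [Finset.mem_insert, Finset.mem_singleton] at this
      rcases this with h' | h' | h'
      exacts [n16 h'.symm, n46 h'.symm, n56 h'.symm]
    · exact absurd h hw6
    · rw [h] at hseq; rw [hseq] at hsB; exact hsB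
  have hs27B : ({x2, x5, x7} : Finset V) ∈ B := by
    obtain ⟨s, ⟨hsB, h2s, h5s⟩, -⟩ := hS.2 x2 x5 n25
    obtain ⟨w, hw2, hw5, hseq⟩ := third (hS.1 _ hsB) h2s h5s n25
    have hws : w ∈ s := by rw [hseq]; simp
    rcases hall7 w with h | h | h | h | h | h | h
    · exfalso
      have heq := uniq hS hsB hb1B (Ne.symm n12) h2s (h ▸ hws) (by simp) (by simp)
      have : x5 ∈ ({x1, x2, x3} : Finset V) := heq ▸ h5s
      simp only [Finset.mem_insert, Finset.mem_singleton] at this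
      rcases this with h' | h' | h'
      exacts [n15 h'.symm, n25 h'.symm, n35 h'.symm]
    · exact absurd h hw2
    · exfalso
      have heq := uniq hS hsB hb1B n23 h2s (h ▸ hws) (by simp) (by simp)
      have : x5 ∈ ({x1, x2, x3} : Finset V) := heq ▸ h5s
      simp only [Finset.mem_insert, Finset.mem_singleton] at this
      rcases this with h' | h' | h'
      exacts [n15 h'.symm, n25 h'.symm, n35 h'.symm]
    · exfalso
      have heq := uniq hS hsB hs24B n24 h2s (h ▸ hws) (by simp) (by simp)
      have : x5 ∈ ({x2, x4, x6} : Finset V) := heq ▸ h5s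
      simp only [Finset.mem_insert, Finset.mem_singleton] at this
      rcases this with h' | h' | h'
      exacts [n25 h'.symm, n45 h'.symm, n56 h']
    · exact absurd h hw5
    · exfalso
      have heq := uniq hS hsB hs24B n26 h2s (h ▸ hws) (by simp) (by simp)
      have : x5 ∈ ({x2, x4, x6} : Finset V) := heq ▸ h5s
      simp only [Finset.mem_insert, Finset.mem_singleton] at this
      rcases this with h' | h' | h'
      exacts [n25 h'.symm, n45 h'.symm, n56 h']
    · rw [h] at hseq; rw [hseq] at hsB; exact hsB
  have hs35B : ({x3, x5, x6} : Finset V) ∈ B := by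
    obtain ⟨s, ⟨hsB, h3s, h5s⟩, -⟩ := hS.2 x3 x5 n35
    obtain ⟨w, hw3, hw5, hseq⟩ := third (hS.1 _ hsB) h3s h5s n35
    have hws : w ∈ s := by rw [hseq]; simp
    rcases hall7 w with h | h | h | h | h | h | h
    · exfalso
      have heq := uniq hS hsB hb1B (Ne.symm n13) h3s (h ▸ hws) (by simp) (by simp)
      have : x5 ∈ ({x1, x2, x3} : Finset V) := heq ▸ h5s
      simp only [Finset.mem_insert, Finset.mem_singleton] at this
      rcases this with h' | h' | h'
      exacts [n15 h'.symm, n25 h'.symm, n35 h'.symm]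
    · exfalso
      have heq := uniq hS hsB hb1B (Ne.symm n23) h3s (h ▸ hws) (by simp) (by simp)
      have : x5 ∈ ({x1, x2, x3} : Finset V) := heq ▸ h5s
      simp only [Finset.mem_insert, Finset.mem_singleton] at this
      rcases this with h' | h' | h'
      exacts [n15 h'.symm, n25 h'.symm, n35 h'.symm]
    · exact absurd h hw3
    · exfalso
      have heq := uniq hS hsB hs34B n34 h3s (h ▸ hws) (by simp) (by simp)
      have : x5 ∈ ({x3, x4, x7} : Finset V) := heq ▸ h5s
      simp only [Finset.mem_insert, Finset.mem_singleton] at this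
      rcases this with h' | h' | h'
      exacts [n35 h'.symm, n45 h'.symm, n57 h']
    · exact absurd h hw5
    · rw [h] at hseq; rw [hseq] at hsB; exact hsB
    · exfalso
      have heq := uniq hS hsB hs34B n37 h3s (h ▸ hws) (by simp) (by simp)
      have : x5 ∈ ({x3, x4, x7} : Finset V) := heq ▸ h5s
      simp only [Finset.mem_insert, Finset.mem_singleton] at this
      rcases this with h' | h' | h'
      exacts [n35 h'.symm, n45 h'.symm, n57 h']
  -- the bijection
  set f : Fin 7 → V := mk7 x1 x2 x3 x4 x5 x6 x7 with hf
  have hrinv : ∀ w : V, f ((fun w => if w = x1 then (0 : Fin 7) else if w = x2 then 1 else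
      if w = x3 then 2 else if w = x4 then 3 else if w = x5 then 4 else
      if w = x6 then 5 else 6) w) = w := by
    intro w
    rcases hall7 w with h | h | h | h | h | h | h <;> rw [h]
    · simp [hf]
    · simp [hf, Ne.symm n12]
    · simp [hf, Ne.symm n13, Ne.symm n23]
    · simp [hf, Ne.symm n14, Ne.symm n24, Ne.symm n34]
    · simp [hf, Ne.symm n15, Ne.symm n25, Ne.symm n35, Ne.symm n45]
    · simp [hf, Ne.symm n16, Ne.symm n26, Ne.symm n36, Ne.symm n46, Ne.symm n56]
    · simp [hf, Ne.symm n17, Ne.symm n27, Ne.symm n37, Ne.symm n47, Ne.symm n57, Ne.symm n67]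
  have hsurj : Function.Surjective f := fun w => ⟨_, hrinv w⟩
  have hbij : Function.Bijective f :=
    (Fintype.bijective_iff_surjective_and_card f).mpr ⟨hsurj, by rw [Fintype.card_fin, hcard]⟩
  have himgB : ∀ t ∈ B0, t.image f ∈ B := by
    intro t ht
    simp only [B0, Finset.mem_insert, Finset.mem_singleton] at ht
    rcases ht with rfl | rfl | rfl | rfl | rfl | rfl | rfl
    · simpa [hf] using hb1B
    · simpa [hf] using hs14B
    · simpa [hf] using hs24B
    · simpa [hf] using hs34B
    · simpa [hf] using hs16B
    · simpa [hf] using hs27B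
    · simpa [hf] using hs35B
  refine ⟨f, hbij, Finset.Subset.antisymm ?_ ?_⟩
  · intro s hsB
    obtain ⟨a, b, c, hab, -, -, rfl⟩ := Finset.card_eq_three.mp (hS.1 s hsB)
    obtain ⟨i, rfl⟩ := hsurj a
    obtain ⟨j, rfl⟩ := hsurj b
    have hij : i ≠ j := fun h => hab (h ▸ rfl)
    obtain ⟨t, htB0, hit, hjt⟩ := d1b i j hij
    have heq : ({f i, f j, c} : Finset V) = t.image f :=
      uniq hS hsB (himgB t htB0) hab (by simp) (by simp)
        (Finset.mem_image_of_mem f hit) (Finset.mem_image_of_mem f hjt)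
    rw [heq]
    exact Finset.mem_image_of_mem _ htB0
  · intro s hs
    obtain ⟨t, ht, rfl⟩ := Finset.mem_image.mp hs
    exact himgB t ht


lemma orient_equiv {W V : Type*} [DecidableEq W] [DecidableEq V] (e : W ≃ V)
    (B : Finset (Finset W)) (r : V → V → Prop) :
    IsOrientation (B.image (Finset.image ⇑e)) r ↔ IsOrientation B (fun i j => r (e i) (e j)) := by
  have himg : ∀ s : Finset W, s.image ⇑e ∈ B.image (Finset.image ⇑e) ↔ s ∈ B := by
    intro s
    constructor
    · intro h
      obtain ⟨t, ht, hts⟩ := Finset.mem_image.mp h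
      rwa [← Finset.image_injective e.injective hts]
    · exact fun h => Finset.mem_image_of_mem _ h
  have hset : ∀ a b c : W, ({e a, e b, e c} : Finset V) = ({a, b, c} : Finset W).image ⇑e := by
    intro a b c; simp
  have hmem : ∀ a b c : W,
      (({e a, e b, e c} : Finset V) ∈ B.image (Finset.image ⇑e)) ↔ ({a, b, c} : Finset W) ∈ B := by
    intro a b c; rw [hset]; exact himg _
  have heq3 : ∀ a b c a' b' c' : W,
      (({e a, e b, e c} : Finset V) = ({e a', e b', e c'} : Finset V)) ↔
        (({a, b, c} : Finset W) = ({a', b', c'} : Finset W)) := by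
    intro a b c a' b' c'
    rw [hset, hset]
    exact ⟨fun h => Finset.image_injective e.injective h, fun h => by rw [h]⟩
  constructor
  · rintro ⟨h1, h2, h3⟩
    refine ⟨fun i j h => h1 _ _ h, fun a b c hm => h2 _ _ _ ((hmem a b c).mpr hm), ?_⟩
    intro x y1 z1 y2 z2 y3 z3 m1 m2 m3 n1 n2 n3 r1 r2 r3
    exact (hmem _ _ _).mp
      (h3 (e x) (e y1) (e z1) (e y2) (e z2) (e y3) (e z3) ((hmem _ _ _).mpr m1)
        ((hmem _ _ _).mpr m2) ((hmem _ _ _).mpr m3) (fun h => n1 ((heq3 _ _ _ _ _ _).mp h))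
        (fun h => n2 ((heq3 _ _ _ _ _ _).mp h)) (fun h => n3 ((heq3 _ _ _ _ _ _).mp h)) r1 r2 r3)
  · rintro ⟨h1, h2, h3⟩
    refine ⟨?_, ?_, ?_⟩
    · intro x y
      obtain ⟨x, rfl⟩ := e.surjective x
      obtain ⟨y, rfl⟩ := e.surjective y
      exact h1 x y
    · intro a b c hm
      obtain ⟨a, rfl⟩ := e.surjective a
      obtain ⟨b, rfl⟩ := e.surjective b
      obtain ⟨c, rfl⟩ := e.surjective c
      exact h2 a b c ((hmem a b c).mp hm)
    · intro x y1 z1 y2 z2 y3 z3 m1 m2 m3 n1 n2 n3 r1 r2 r3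
      obtain ⟨x, rfl⟩ := e.surjective x
      obtain ⟨y1, rfl⟩ := e.surjective y1
      obtain ⟨z1, rfl⟩ := e.surjective z1
      obtain ⟨y2, rfl⟩ := e.surjective y2
      obtain ⟨z2, rfl⟩ := e.surjective z2
      obtain ⟨y3, rfl⟩ := e.surjective y3
      obtain ⟨z3, rfl⟩ := e.surjective z3
      exact (hmem _ _ _).mpr
        (h3 x y1 z1 y2 z2 y3 z3 ((hmem _ _ _).mp m1) ((hmem _ _ _).mp m2) ((hmem _ _ _).mp m3)
          (fun h => n1 ((heq3 _ _ _ _ _ _).mpr h)) (fun h => n2 ((heq3 _ _ _ _ _ _).mpr h))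
          (fun h => n3 ((heq3 _ _ _ _ _ _).mpr h)) r1 r2 r3)


end EO

/-- Every Fano plane admits exactly eight distinct orientations. -/
theorem eight_orientations {V : Type*} [DecidableEq V] [Fintype V]
    (B : Finset (Finset V)) (hB : IsFano B) :
    {r : V → V → Prop | IsOrientation B r}.ncard = 8 := by
  obtain ⟨f, hbij, hBeq⟩ := EO.classification hB
  let e : Fin 7 ≃ V := Equiv.ofBijective f hbij
  have hcoe : ⇑e = f := rfl
  have hBeq' : B = EO.B0.image (Finset.image ⇑e) := by rw [hBeq, hcoe]
  have hset : {r : V → V → Prop | IsOrientation B r}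
      = (fun r' : Fin 7 → Fin 7 → Prop => fun x y : V => r' (e.symm x) (e.symm y)) ''
        {r' : Fin 7 → Fin 7 → Prop | IsOrientation EO.B0 r'} := by
    ext r
    simp only [Set.mem_setOf_eq, Set.mem_image]
    constructor
    · intro hO
      refine ⟨fun i j => r (e i) (e j), ?_, ?_⟩
      · exact (EO.orient_equiv e EO.B0 r).mp (hBeq' ▸ hO)
      · funext x y; simp
    · rintro ⟨r', hr', rfl⟩
      rw [hBeq']
      have h2 : (fun i j => r' (e.symm (e i)) (e.symm (e j))) = r' := by
        funext i j; simp
      exact (EO.orient_equiv e EO.B0 _).mpr (h2.symm ▸ hr')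
  have hinj : Set.InjOn (fun r' : Fin 7 → Fin 7 → Prop => fun x y : V => r' (e.symm x) (e.symm y))
      {r' : Fin 7 → Fin 7 → Prop | IsOrientation EO.B0 r'} := by
    intro r1 _ r2 _ h
    funext i j
    have := congrFun (congrFun h (e i)) (e j)
    simpa using this
  rw [hset, Set.ncard_image_of_injOn hinj, EO.count0]
end

section
/- If → is an orientation on a Fano plane F and σ is an automorphism of F, then σ preserves → (i.e., σ is an automorphism of the oriented Fano plane (F,→)) if and only if σ is an automorphism of the associated orthogonal Fano plane F_→. -/
section OrientAux

open Finset
open scoped Classical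

set_option linter.unusedSectionVars false

variable {V : Type*} [DecidableEq V] [Fintype V]

noncomputable def Tset (r : V → V → Prop) (v : V) : Finset V :=
  Finset.univ.filter (fun x => r x v)

noncomputable def Oset (r : V → V → Prop) (v : V) : Finset V :=
  Finset.univ.filter (fun y => r v y)

lemma mem_Tset {r : V → V → Prop} {v x : V} : x ∈ Tset r v ↔ r x v := by simp [Tset]

lemma mem_Oset {r : V → V → Prop} {v x : V} : x ∈ Oset r v ↔ r v x := by simp [Oset]

variable {B : Finset (Finset V)} {r : V → V → Prop}

lemma not_r_self (hr : IsOrientation B r) (x : V) : ¬ r x x :=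
  fun h => hr.1 x x h h

lemma third_point {b : Finset V} (hcard : b.card = 3) {x y : V}
    (hx : x ∈ b) (hy : y ∈ b) (hxy : x ≠ y) :
    ∃ z, z ≠ x ∧ z ≠ y ∧ b = {x, y, z} := by
  have hsub : ({x, y} : Finset V) ⊆ b := by
    intro t ht; simp only [mem_insert, mem_singleton] at ht
    rcases ht with rfl | rfl <;> assumption
  have hc2 : ({x, y} : Finset V).card = 2 := by
    rw [card_insert_of_notMem (by simpa using hxy), card_singleton]
  have h1 : (b \ {x, y}).card = 1 := by
    rw [card_sdiff_of_subset hsub, hcard, hc2]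
  obtain ⟨z, hz⟩ := card_eq_one.mp h1
  have hzb : z ∈ b \ ({x, y} : Finset V) := by rw [hz]; exact mem_singleton_self z
  rw [mem_sdiff, mem_insert, mem_singleton] at hzb
  push_neg at hzb
  refine ⟨z, hzb.2.1, hzb.2.2, ?_⟩
  have hsub3 : ({x, y, z} : Finset V) ⊆ b := by
    intro t ht; simp only [mem_insert, mem_singleton] at ht
    rcases ht with rfl | rfl | rfl
    · exact hx
    · exact hy
    · exact hzb.1
  refine (eq_of_subset_of_card_le hsub3 ?_).symm
  rw [hcard]
  rw [card_insert_of_notMem (by simp [hxy, hzb.2.1.symm]),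
      card_insert_of_notMem (by simp [hzb.2.2.symm]), card_singleton]

lemma tourn (hB : IsFano B) (hr : IsOrientation B r) {x y : V} (hxy : x ≠ y) :
    r x y ∨ r y x := by
  obtain ⟨b, ⟨hbB, hxb, hyb⟩, -⟩ := hB.2.2 x y hxy
  obtain ⟨z, -, -, rfl⟩ := third_point (hB.2.1 b hbB) hxb hyb hxy
  rcases hr.2.1 x y z hbB with ⟨h, -, -⟩ | ⟨-, -, h⟩
  · exact Or.inl h
  · exact Or.inr h

lemma pair_block (hB : IsFano B) {x y : V} (hxy : x ≠ y) :
    ∃ z, z ≠ x ∧ z ≠ y ∧ ({x, y, z} : Finset V) ∈ B ∧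
      ∀ c ∈ B, x ∈ c → y ∈ c → c = ({x, y, z} : Finset V) := by
  obtain ⟨b, ⟨hbB, hxb, hyb⟩, huniq⟩ := hB.2.2 x y hxy
  obtain ⟨z, hzx, hzy, rfl⟩ := third_point (hB.2.1 b hbB) hxb hyb hxy
  refine ⟨z, hzx, hzy, hbB, fun c hc hxc hyc => huniq c ⟨hc, hxc, hyc⟩⟩

lemma block_eq (hB : IsFano B) {x y : V} (hxy : x ≠ y) {c d : Finset V}
    (hc : c ∈ B) (hd : d ∈ B) (hxc : x ∈ c) (hyc : y ∈ c) (hxd : x ∈ d) (hyd : y ∈ d) :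
    c = d := by
  obtain ⟨b, -, h⟩ := hB.2.2 x y hxy
  rw [h c ⟨hc, hxc, hyc⟩, h d ⟨hd, hxd, hyd⟩]

lemma cyc3 (hr : IsOrientation B r) {x y z : V}
    (hb : ({x, y, z} : Finset V) ∈ B) (hxy : r x y) : r y z ∧ r z x := by
  rcases hr.2.1 x y z hb with ⟨-, h2, h3⟩ | ⟨-, -, h⟩
  · exact ⟨h2, h3⟩
  · exact absurd hxy (hr.1 y x h)

/-- for each out-neighbor `w` of `v`, the block through `v,w` is `{v,w,u}` with `w→u→v`. -/
lemma key_out (hB : IsFano B) (hr : IsOrientation B r) {v w : V} (hw : r v w) :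
    ∃ u, r w u ∧ r u v ∧ ({v, w, u} : Finset V) ∈ B ∧
      ∀ c ∈ B, v ∈ c → w ∈ c → c = ({v, w, u} : Finset V) := by
  have hvw : v ≠ w := by rintro rfl; exact not_r_self hr v hw
  obtain ⟨u, -, -, hb, huniq⟩ := pair_block hB hvw
  obtain ⟨h1, h2⟩ := cyc3 hr hb hw
  exact ⟨u, h1, h2, hb, huniq⟩

lemma key_in (hB : IsFano B) (hr : IsOrientation B r) {v a : V} (ha : r a v) :
    ∃ t, r v t ∧ r t a ∧ ({a, v, t} : Finset V) ∈ B := by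
  have hav : a ≠ v := by rintro rfl; exact not_r_self hr a ha
  obtain ⟨t, -, -, hb, -⟩ := pair_block hB hav
  obtain ⟨h1, h2⟩ := cyc3 hr hb ha
  exact ⟨t, h1, h2, hb⟩

lemma cards (hB : IsFano B) (hr : IsOrientation B r) (v : V) :
    (Tset r v).card = 3 ∧ (Oset r v).card = 3 := by
  have hunion : Tset r v ∪ Oset r v = Finset.univ.erase v := by
    ext x
    simp only [mem_union, mem_Tset, mem_Oset, mem_erase, mem_univ, and_true]
    constructor
    · rintro (h | h) <;> rintro rfl <;> exact not_r_self hr _ h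
    · intro hx; exact tourn hB hr hx
  have hdisj : Disjoint (Tset r v) (Oset r v) := by
    rw [Finset.disjoint_left]
    intro x hx hx'
    exact hr.1 v x (mem_Oset.mp hx') (mem_Tset.mp hx)
  have hsum : (Tset r v).card + (Oset r v).card = 6 := by
    rw [← card_union_of_disjoint hdisj, hunion, card_erase_of_mem (mem_univ v),
      Finset.card_univ, hB.1]
  -- T ↪ O
  have hTO : (Tset r v).card ≤ (Oset r v).card := by
    apply Finset.card_le_card_of_injOn
      (fun a => if h : r a v then (key_in hB hr h).choose else v)
    · intro a ha
      have h := mem_Tset.mp ha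
      simp only [dif_pos h]
      exact mem_Oset.mpr (key_in hB hr h).choose_spec.1
    · intro a ha a' ha' heq
      have h := mem_Tset.mp ha
      have h' := mem_Tset.mp ha'
      simp only [dif_pos h, dif_pos h'] at heq
      obtain ⟨hvt, hta, hbt⟩ := (key_in hB hr h).choose_spec
      obtain ⟨hvt', hta', hbt'⟩ := (key_in hB hr h').choose_spec
      set t := (key_in hB hr h).choose with hts
      set t' := (key_in hB hr h').choose with hts'
      have hvtne : v ≠ t := by
        intro hh; rw [← hh] at hvt; exact not_r_self hr v hvt
      have hbeq : ({a, v, t} : Finset V) = ({a', v, t'} : Finset V) := by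
        refine block_eq hB hvtne hbt hbt' (by simp) (by simp) (by simp) ?_
        rw [← heq]; simp
      have : a' ∈ ({a, v, t} : Finset V) := by rw [hbeq]; simp
      simp only [mem_insert, mem_singleton] at this
      rcases this with h1 | h1 | h1
      · exact h1.symm
      · rw [h1] at h'; exact absurd h' (not_r_self hr v)
      · rw [h1, ← heq] at hta'; exact absurd hta' (not_r_self hr _)
  -- O ↪ T
  have hOT : (Oset r v).card ≤ (Tset r v).card := by
    apply Finset.card_le_card_of_injOn
      (fun w => if h : r v w then (key_out hB hr h).choose else v)
    · intro w hw
      have h := mem_Oset.mp hw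
      simp only [dif_pos h]
      exact mem_Tset.mpr (key_out hB hr h).choose_spec.2.1
    · intro w hw w' hw' heq
      have h := mem_Oset.mp hw
      have h' := mem_Oset.mp hw'
      simp only [dif_pos h, dif_pos h'] at heq
      obtain ⟨hwu, huv, hbu, -⟩ := (key_out hB hr h).choose_spec
      obtain ⟨hwu', huv', hbu', -⟩ := (key_out hB hr h').choose_spec
      set u := (key_out hB hr h).choose with hus
      set u' := (key_out hB hr h').choose with hus'
      have hvune : v ≠ u := fun hh => not_r_self hr v (hh ▸ huv)
      have hbeq : ({v, w, u} : Finset V) = ({v, w', u'} : Finset V) := by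
        refine block_eq hB hvune hbu hbu' (by simp) (by simp) (by simp) ?_
        rw [← heq]; simp
      have : w' ∈ ({v, w, u} : Finset V) := by rw [hbeq]; simp
      simp only [mem_insert, mem_singleton] at this
      rcases this with h1 | h1 | h1
      · rw [h1] at h'; exact absurd h' (not_r_self hr v)
      · exact h1.symm
      · rw [h1] at h'; exact absurd h' (hr.1 _ v huv)
  omega

lemma Oset_mem_B (hB : IsFano B) (hr : IsOrientation B r) (v : V) : Oset r v ∈ B := by
  obtain ⟨w1, w2, w3, h12, h13, h23, hOeq⟩ := Finset.card_eq_three.mp (cards hB hr v).2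
  have hw1 : r v w1 := mem_Oset.mp (by rw [hOeq]; simp)
  have hw2 : r v w2 := mem_Oset.mp (by rw [hOeq]; simp)
  have hw3 : r v w3 := mem_Oset.mp (by rw [hOeq]; simp)
  obtain ⟨u1, hwu1, hu1v, hb1, -⟩ := key_out hB hr hw1
  obtain ⟨u2, hwu2, hu2v, hb2, -⟩ := key_out hB hr hw2
  obtain ⟨u3, hwu3, hu3v, hb3, -⟩ := key_out hB hr hw3
  have hblkne : ∀ wa ua wb ub : V, wa ≠ wb → r v wb → r ua v →
      ({v, wa, ua} : Finset V) ≠ ({v, wb, ub} : Finset V) := by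
    intro wa ua wb ub hab hvb hua hne
    have : wb ∈ ({v, wa, ua} : Finset V) := by rw [hne]; simp
    simp only [mem_insert, mem_singleton] at this
    rcases this with h1 | h1 | h1
    · rw [h1] at hvb; exact not_r_self hr v hvb
    · exact hab h1.symm
    · rw [h1] at hvb; exact hr.1 _ _ hua hvb
  have := hr.2.2 v w1 u1 w2 u2 w3 u3 hb1 hb2 hb3
    (hblkne w1 u1 w2 u2 h12 hw2 hu1v) (hblkne w1 u1 w3 u3 h13 hw3 hu1v)
    (hblkne w2 u2 w3 u3 h23 hw3 hu2v) hw1 hw2 hw3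
  rw [hOeq]; exact this

/-- Existence half of the labeling characterization. -/
lemma label_spec (hB : IsFano B) (hr : IsOrientation B r) (v : V) :
    v ∉ Tset r v ∧
      ∀ a b : V, a ∈ Tset r v → b ∈ Tset r v → a ≠ b → ({a, b, v} : Finset V) ∉ B := by
  refine ⟨fun h => not_r_self hr v (mem_Tset.mp h), ?_⟩
  intro a b ha hb hab hblk
  have hav : r a v := mem_Tset.mp ha
  have hbv : r b v := mem_Tset.mp hb
  rcases hr.2.1 a b v hblk with ⟨-, -, h⟩ | ⟨-, h, -⟩
  · exact hr.1 a v hav h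
  · exact hr.1 b v hbv h

/-- Uniqueness half of the labeling characterization. -/
lemma label_unique (hB : IsFano B) (hr : IsOrientation B r) {v w : V}
    (hw : w ∉ Tset r v)
    (hblk : ∀ a b : V, a ∈ Tset r v → b ∈ Tset r v → a ≠ b →
      ({a, b, w} : Finset V) ∉ B) :
    w = v := by
  by_contra hne
  have hnwv : ¬ r w v := fun h => hw (mem_Tset.mpr h)
  have hrvw : r v w := (tourn hB hr hne).resolve_left hnwv
  have hvw : v ≠ w := fun h => not_r_self hr v (h ▸ hrvw)
  obtain ⟨u, hzu, huz, hzb, huniq2⟩ := pair_block hB hvw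
  have hwu : r w u ∧ r u v := cyc3 hr hzb hrvw
  have huT : u ∈ Tset r v := mem_Tset.mpr hwu.2
  -- pick a ∈ T(v), a ≠ u
  have hex : ∃ a ∈ Tset r v, a ≠ u := by
    by_contra hcon
    push_neg at hcon
    have hsub : Tset r v ⊆ {u} := fun a ha => by simp [hcon a ha]
    have := (card_le_card hsub).trans_eq (card_singleton u)
    rw [(cards hB hr v).1] at this
    omega
  obtain ⟨a, haT, hau⟩ := hex
  have hra : r a v := mem_Tset.mp haT
  have haw : a ≠ w := fun h => hw (h ▸ haT)
  obtain ⟨z, hzw', hza, hb3, -⟩ := pair_block hB haw.symm  -- block {w, a, z}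
  have hzv : z ≠ v := by
    intro hh
    rw [hh] at hb3
    have heq : ({w, a, v} : Finset V) = ({v, w, u} : Finset V) :=
      huniq2 _ hb3 (by simp) (by simp)
    have : a ∈ ({v, w, u} : Finset V) := by rw [← heq]; simp
    simp only [mem_insert, mem_singleton] at this
    rcases this with rfl | rfl | rfl
    · exact not_r_self hr a hra
    · exact haw rfl
    · exact hau rfl
  have hznO : ¬ r v z := by
    intro hrvz
    have hOB : Oset r v ∈ B := Oset_mem_B hB hr v
    have heq : ({w, a, z} : Finset V) = Oset r v := by
      refine block_eq hB (show z ≠ w from hzw') hb3 hOB (by simp) (by simp)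
        (mem_Oset.mpr hrvz) (mem_Oset.mpr hrvw)
    have : a ∈ Oset r v := by rw [← heq]; simp
    exact hr.1 a v hra (mem_Oset.mp this)
  have hzT : z ∈ Tset r v := mem_Tset.mpr ((tourn hB hr hzv).resolve_right hznO)
  refine hblk a z haT hzT (fun h => hza h.symm) ?_
  have : ({a, z, w} : Finset V) = ({w, a, z} : Finset V) := by
    ext t; simp only [mem_insert, mem_singleton]; tauto
  rw [this]; exact hb3

end OrientAux

section Main

open Finset
open scoped Classical

set_option linter.unusedSectionVars false

variable {V : Type*} [DecidableEq V] [Fintype V] {B : Finset (Finset V)} {r : V → V → Prop}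

lemma Tset_mem (r : V → V → Prop) (v : V) : Tset r v ∈ orientBlocks r := by
  simp only [orientBlocks, mem_image]
  exact ⟨v, mem_univ v, rfl⟩

lemma mem_orientBlocks {b : Finset V} :
    b ∈ orientBlocks r ↔ ∃ v, Tset r v = b := by
  simp [orientBlocks, Tset]

lemma image_triple (σ : Equiv.Perm V) (a b c : V) :
    ({a, b, c} : Finset V).image σ = ({σ a, σ b, σ c} : Finset V) := by
  rw [image_insert, image_insert, image_singleton]

lemma orientation_comp (hB : IsFano B) (hr : IsOrientation B r) (σ : Equiv.Perm V)
    (hσ : IsAutomorphism B σ) : IsOrientation B (fun x y => r (σ x) (σ y)) := by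
  refine ⟨fun x y h => hr.1 _ _ h, ?_, ?_⟩
  · intro x1 x2 x3 hb
    have h' : ({σ x1, σ x2, σ x3} : Finset V) ∈ B := by
      have := (hσ {x1, x2, x3}).mpr hb
      rwa [image_triple] at this
    exact hr.2.1 _ _ _ h'
  · intro x y1 z1 y2 z2 y3 z3 h1 h2 h3 hne12 hne13 hne23 hr1 hr2 hr3
    have himg : ∀ a b c : V, ({a, b, c} : Finset V) ∈ B →
        ({σ a, σ b, σ c} : Finset V) ∈ B := by
      intro a b c h
      have := (hσ {a, b, c}).mpr h
      rwa [image_triple] at this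
    have hne : ∀ a b c d e f : V, ({a, b, c} : Finset V) ≠ ({d, e, f} : Finset V) →
        ({σ a, σ b, σ c} : Finset V) ≠ ({σ d, σ e, σ f} : Finset V) := by
      intro a b c d e f h hcon
      apply h
      apply Finset.image_injective σ.injective
      rw [image_triple, image_triple]
      exact hcon
    have := hr.2.2 (σ x) (σ y1) (σ z1) (σ y2) (σ z2) (σ y3) (σ z3)
      (himg _ _ _ h1) (himg _ _ _ h2) (himg _ _ _ h3)
      (hne _ _ _ _ _ _ hne12) (hne _ _ _ _ _ _ hne13) (hne _ _ _ _ _ _ hne23)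
      hr1 hr2 hr3
    apply (hσ {y1, y2, y3}).mp
    rw [image_triple]
    exact this

lemma Tset_comp (σ : Equiv.Perm V) (v : V) :
    Tset (fun x y => r (σ x) (σ y)) v = (Tset r (σ v)).image σ.symm := by
  ext x
  simp only [mem_Tset, Finset.mem_image]
  constructor
  · intro h
    exact ⟨σ x, h, σ.symm_apply_apply x⟩
  · rintro ⟨a, ha, rfl⟩
    simpa [σ.apply_symm_apply] using ha

lemma image_Tset (σ : Equiv.Perm V) (hpres : ∀ x y : V, r (σ x) (σ y) ↔ r x y) (v : V) :
    (Tset r v).image σ = Tset r (σ v) := by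
  ext x
  simp only [mem_image, mem_Tset]
  constructor
  · rintro ⟨a, ha, rfl⟩
    exact (hpres a v).mpr ha
  · intro h
    refine ⟨σ.symm x, ?_, σ.apply_symm_apply x⟩
    have := (hpres (σ.symm x) v)
    rw [σ.apply_symm_apply] at this
    exact this.mp h

end Main

/-- An automorphism `σ` of a Fano plane `B` preserves an orientation `r` iff `σ`
is an automorphism of the associated orthogonal Fano plane `F_r`. -/
theorem preserves_orientation_iff_aut_orientBlocks {V : Type*} [DecidableEq V] [Fintype V]
    (B : Finset (Finset V)) (r : V → V → Prop) (σ : Equiv.Perm V)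
    (hB : IsFano B) (hr : IsOrientation B r) (hσ : IsAutomorphism B σ) :
    (∀ x y : V, r (σ x) (σ y) ↔ r x y) ↔ IsAutomorphism (orientBlocks r) σ := by

  constructor
  · intro hpres
    have hpres' : ∀ x y : V, r (σ.symm x) (σ.symm y) ↔ r x y := by
      intro x y
      have := (hpres (σ.symm x) (σ.symm y)).symm
      rwa [σ.apply_symm_apply, σ.apply_symm_apply] at this
    intro b
    constructor
    · intro hb
      obtain ⟨v, hv⟩ := mem_orientBlocks.mp hb
      have hbb : b = (Tset r v).image σ.symm := by
        rw [hv]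
        rw [Finset.image_image]
        have hcomp : (⇑σ.symm ∘ ⇑σ : V → V) = id := funext fun x => σ.symm_apply_apply x
        rw [hcomp, Finset.image_id]
      rw [hbb, image_Tset σ.symm hpres' v]
      exact Tset_mem r (σ.symm v)
    · intro hb
      obtain ⟨v, hv⟩ := mem_orientBlocks.mp hb
      rw [← hv, image_Tset σ hpres v]
      exact Tset_mem r (σ v)
  · intro hauto x y
    set s : V → V → Prop := fun a b => r (σ a) (σ b) with hs
    have hsor : IsOrientation B s := orientation_comp hB hr σ hσ
    have hmem : ∀ v : V, Tset s v ∈ orientBlocks r := by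
      intro v
      have h1 : Tset s v = (Tset r (σ v)).image σ.symm := Tset_comp σ v
      have h2 : ((Tset r (σ v)).image σ.symm).image σ = Tset r (σ v) := by
        rw [Finset.image_image]
        have hcomp : (⇑σ ∘ ⇑σ.symm : V → V) = id := funext fun x => σ.apply_symm_apply x
        rw [hcomp, Finset.image_id]
      rw [h1]
      exact (hauto _).mp (by rw [h2]; exact Tset_mem r (σ v))
    have hTeq : ∀ v : V, Tset s v = Tset r v := by
      intro v
      obtain ⟨w, hw⟩ := mem_orientBlocks.mp (hmem v)
      obtain ⟨hv1, hv2⟩ := label_spec hB hsor v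
      rw [← hw] at hv1 hv2
      have hvw : v = w := label_unique hB hr hv1 hv2
      rw [← hw, hvw]
    constructor
    · intro h
      have hsxy : s x y := by rw [hs]; exact h
      have hx : x ∈ Tset s y := mem_Tset.mpr hsxy
      rw [hTeq y] at hx
      exact mem_Tset.mp hx
    · intro h
      have hx : x ∈ Tset r y := mem_Tset.mpr h
      rw [← hTeq y] at hx
      have hsxy : s x y := mem_Tset.mp hx
      rw [hs] at hsxy
      exact hsxy
end
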